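/- arXiv:math/0409381 — 8 statements merged into one kernel-verified Lean document; each statement's English description precedes it below -/
import Mathlib

section
/- Suppose translates of two bricks A (with dimensions a_1,...,a_d) and B (with dimensions b_1,...,b_d) tile the unit cube Q = (-1/2,1/2)^d, i.e. ∑_{λ∈Λ_a} χ_A(x-λ) + ∑_{λ∈Λ_b} χ_B(x-λ) = χ_Q(x) for a.e. x, where Λ_a, Λ_b are finite subsets of R^d. Then for every pair of distinct indices i ≠ j in {1,...,d}, at least one of 1/a_i and 1/b_j is an integer. -/
open MeasureTheory Real

private lemma indicator_prod_eq {d : ℕ} (s : Fin d → ℝ) (l : EuclideanSpace ℝ (Fin d))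
    (c : Fin d → ℝ → ℝ) (x : EuclideanSpace ℝ (Fin d)) :
    Set.indicator {y : EuclideanSpace ℝ (Fin d) | ∀ k, y k ∈ Set.Ioo (-(s k) / 2) (s k / 2)}
      (fun _ => (1:ℝ)) (x - l) * ∏ k, c k (x k)
    = ∏ k, Set.indicator (Set.Ioo (l k - s k / 2) (l k + s k / 2)) (c k) (x k) := by
  have hiff : ∀ k, (x - l) k ∈ Set.Ioo (-(s k) / 2) (s k / 2) ↔
      x k ∈ Set.Ioo (l k - s k / 2) (l k + s k / 2) := by
    intro k
    have : (x - l) k = x k - l k := rfl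
    rw [this, Set.mem_Ioo, Set.mem_Ioo]
    constructor <;> (rintro ⟨h1, h2⟩; constructor <;> linarith)
  by_cases hmem : ∀ k, (x - l) k ∈ Set.Ioo (-(s k) / 2) (s k / 2)
  · rw [Set.indicator_of_mem (show x - l ∈ {y : EuclideanSpace ℝ (Fin d) |
        ∀ k, y k ∈ Set.Ioo (-(s k) / 2) (s k / 2)} from hmem), one_mul]
    exact Finset.prod_congr rfl fun k _ =>
      (Set.indicator_of_mem ((hiff k).mp (hmem k)) _).symm
  · rw [Set.indicator_of_notMem (show x - l ∉ {y : EuclideanSpace ℝ (Fin d) |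
        ∀ k, y k ∈ Set.Ioo (-(s k) / 2) (s k / 2)} from hmem), zero_mul]
    push_neg at hmem
    obtain ⟨k, hk⟩ := hmem
    exact (Finset.prod_eq_zero (Finset.mem_univ k)
      (Set.indicator_of_notMem (fun h => hk ((hiff k).mpr h)) _)).symm

private lemma brick_integral {d : ℕ} (s : Fin d → ℝ) (l : EuclideanSpace ℝ (Fin d))
    (c : Fin d → ℝ → ℝ) (S : Set (EuclideanSpace ℝ (Fin d)))
    (hS : S = {y : EuclideanSpace ℝ (Fin d) | ∀ k, y k ∈ Set.Ioo (-(s k) / 2) (s k / 2)}) :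
    ∫ x : EuclideanSpace ℝ (Fin d),
      Set.indicator S (fun _ => (1:ℝ)) (x - l) * ∏ k, c k (x k)
    = ∏ k, ∫ t in Set.Ioo (l k - s k / 2) (l k + s k / 2), c k t := by
  subst hS
  have hmp : MeasurePreserving (MeasurableEquiv.toLp 2 (Fin d → ℝ)) volume volume :=
    (EuclideanSpace.volume_preserving_symm_measurableEquiv_toLp (Fin d)).symm
  simp_rw [indicator_prod_eq s l c]
  rw [← hmp.integral_comp']
  have : ∀ (y : Fin d → ℝ) (k : Fin d),
      ((MeasurableEquiv.toLp 2 (Fin d → ℝ)) y) k = y k := fun _ _ => rfl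
  simp_rw [this]
  rw [MeasureTheory.integral_fintype_prod_volume_eq_prod]
  exact Finset.prod_congr rfl fun k _ => integral_indicator measurableSet_Ioo

private lemma brick_integrable {d : ℕ} (s : Fin d → ℝ) (l : EuclideanSpace ℝ (Fin d))
    (c : Fin d → ℝ → ℝ) (hc : ∀ k, Continuous (c k)) (S : Set (EuclideanSpace ℝ (Fin d)))
    (hS : S = {y : EuclideanSpace ℝ (Fin d) | ∀ k, y k ∈ Set.Ioo (-(s k) / 2) (s k / 2)}) :
    Integrable (fun x : EuclideanSpace ℝ (Fin d) =>
      Set.indicator S (fun _ => (1:ℝ)) (x - l) * ∏ k, c k (x k)) := by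
  subst hS
  simp_rw [indicator_prod_eq s l c]
  have h1 : ∀ k, Integrable (fun t : ℝ =>
      Set.indicator (Set.Ioo (l k - s k / 2) (l k + s k / 2)) (c k) t) := by
    intro k
    rw [integrable_indicator_iff measurableSet_Ioo]
    exact (hc k).integrableOn_Icc.mono_set Set.Ioo_subset_Icc_self
  have h2 : Integrable (fun y : Fin d → ℝ =>
      ∏ k, Set.indicator (Set.Ioo (l k - s k / 2) (l k + s k / 2)) (c k) (y k)) :=
    Integrable.fintype_prod h1
  have hmp : MeasurePreserving (MeasurableEquiv.toLp 2 (Fin d → ℝ)) volume volume :=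
    (EuclideanSpace.volume_preserving_symm_measurableEquiv_toLp (Fin d)).symm
  exact (hmp.integrable_comp_emb (MeasurableEquiv.measurableEmbedding _)).mp h2

private lemma cos_period_integral {p : ℝ} (hp : 0 < p) (c : ℝ) :
    ∫ t in Set.Ioo (c - p / 2) (c + p / 2), Real.cos (2 * π / p * t) = 0 := by
  have hle : c - p / 2 ≤ c + p / 2 := by linarith
  have hω : 2 * π / p ≠ 0 := by positivity
  rw [← MeasureTheory.integral_Ioc_eq_integral_Ioo,
    ← intervalIntegral.integral_of_le hle,
    intervalIntegral.integral_comp_mul_left (fun x => Real.cos x) hω,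
    integral_cos]
  have e1 : 2 * π / p * (c + p / 2) = 2 * π / p * c + π := by field_simp
  have e2 : 2 * π / p * (c - p / 2) = 2 * π / p * c - π := by field_simp
  rw [e1, e2, Real.sin_add_pi, Real.sin_sub_pi]
  simp

private lemma cos_Q_integral {p : ℝ} (hp : 0 < p) (h : ¬∃ n : ℤ, p⁻¹ = (n : ℝ)) :
    ∫ t in Set.Ioo ((0:ℝ) - 1 / 2) (0 + 1 / 2), Real.cos (2 * π / p * t) ≠ 0 := by
  have hle : (0:ℝ) - 1 / 2 ≤ 0 + 1 / 2 := by norm_num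
  have hω : 2 * π / p ≠ 0 := by positivity
  rw [← MeasureTheory.integral_Ioc_eq_integral_Ioo,
    ← intervalIntegral.integral_of_le hle,
    intervalIntegral.integral_comp_mul_left (fun x => Real.cos x) hω,
    integral_cos]
  have e1 : 2 * π / p * (0 + 1 / 2) = π / p := by ring
  have e2 : 2 * π / p * (0 - 1 / 2) = -(π / p) := by ring
  rw [e1, e2, Real.sin_neg]
  have hsin : Real.sin (π / p) ≠ 0 := by
    intro hs
    obtain ⟨n, hn⟩ := Real.sin_eq_zero_iff.mp hs
    have hpn : π * (n : ℝ) = π * p⁻¹ := by rw [div_eq_mul_inv] at hn; linarith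
    exact h ⟨n, (mul_left_cancel₀ Real.pi_ne_zero hpn).symm⟩
  intro hcon
  rw [smul_eq_mul] at hcon
  rcases mul_eq_zero.mp hcon with h1 | h2
  · exact hω (by simpa using inv_eq_zero.mp h1)
  · apply hsin; linarith

/-- If translates of two bricks `A` and `B` tile the unit cube `Q = (-1/2,1/2)^d`,
then for every pair of distinct indices `i ≠ j`, at least one of `1 / a i` and `1 / b j`
is an integer. -/
theorem tiling_two_bricks_key_observation (d : ℕ) (hd : 2 ≤ d)
    (a b : Fin d → ℝ) (ha : ∀ j, 0 < a j) (hb : ∀ j, 0 < b j)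
    (A B Q : Set (EuclideanSpace ℝ (Fin d)))
    (hA : A = {x : EuclideanSpace ℝ (Fin d) | ∀ j, x j ∈ Set.Ioo (-(a j) / 2) (a j / 2)})
    (hB : B = {x : EuclideanSpace ℝ (Fin d) | ∀ j, x j ∈ Set.Ioo (-(b j) / 2) (b j / 2)})
    (hQ : Q = {x : EuclideanSpace ℝ (Fin d) | ∀ j, x j ∈ Set.Ioo (-(1 : ℝ) / 2) (1 / 2)})
    (Λa Λb : Finset (EuclideanSpace ℝ (Fin d)))
    (htile : ∀ᵐ x : EuclideanSpace ℝ (Fin d),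
      (∑ l ∈ Λa, A.indicator (fun _ => (1 : ℝ)) (x - l)) +
      (∑ l ∈ Λb, B.indicator (fun _ => (1 : ℝ)) (x - l)) =
      Q.indicator (fun _ => (1 : ℝ)) x) :
    ∀ i j : Fin d, i ≠ j →
      (∃ n : ℤ, (a i)⁻¹ = n) ∨ (∃ n : ℤ, (b j)⁻¹ = n) := by
  intro i j hij
  by_contra hcon
  push_neg at hcon
  obtain ⟨hai, hbj⟩ := hcon
  have hij' : j ≠ i := hij.symm
  set c : Fin d → ℝ → ℝ := fun k t =>
    if k = i then Real.cos (2 * π / a i * t)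
    else if k = j then Real.cos (2 * π / b j * t) else 1 with hc_def
  have hc : ∀ k, Continuous (c k) := by
    intro k
    simp only [hc_def]
    split_ifs <;> fun_prop
  have hci : c i = fun t => Real.cos (2 * π / a i * t) := by
    funext t; simp [hc_def]
  have hcj : c j = fun t => Real.cos (2 * π / b j * t) := by
    funext t; simp [hc_def, hij']
  have hQ1 : Q = {y : EuclideanSpace ℝ (Fin d) |
      ∀ k, y k ∈ Set.Ioo (-((fun _ : Fin d => (1:ℝ)) k) / 2) (((fun _ : Fin d => (1:ℝ)) k) / 2)} :=
    hQ
  -- multiplied tiling identity, integrated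
  have h2 : (fun x : EuclideanSpace ℝ (Fin d) =>
      ((∑ l ∈ Λa, A.indicator (fun _ => (1 : ℝ)) (x - l)) +
       (∑ l ∈ Λb, B.indicator (fun _ => (1 : ℝ)) (x - l))) * ∏ k, c k (x k))
      =ᵐ[volume] (fun x => Q.indicator (fun _ => (1 : ℝ)) x * ∏ k, c k (x k)) :=
    htile.mono fun x hx => by dsimp only; rw [hx]
  have hint := integral_congr_ae h2
  -- LHS is 0
  have hAzero : ∀ l : EuclideanSpace ℝ (Fin d),
      ∫ x : EuclideanSpace ℝ (Fin d),
        A.indicator (fun _ => (1:ℝ)) (x - l) * ∏ k, c k (x k) = 0 := by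
    intro l
    rw [brick_integral a l c A hA]
    refine Finset.prod_eq_zero (Finset.mem_univ i) ?_
    rw [hci]
    exact cos_period_integral (ha i) (l i)
  have hBzero : ∀ l : EuclideanSpace ℝ (Fin d),
      ∫ x : EuclideanSpace ℝ (Fin d),
        B.indicator (fun _ => (1:ℝ)) (x - l) * ∏ k, c k (x k) = 0 := by
    intro l
    rw [brick_integral b l c B hB]
    refine Finset.prod_eq_zero (Finset.mem_univ j) ?_
    rw [hcj]
    exact cos_period_integral (hb j) (l j)
  have hL : ∫ x : EuclideanSpace ℝ (Fin d),
      ((∑ l ∈ Λa, A.indicator (fun _ => (1 : ℝ)) (x - l)) +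
       (∑ l ∈ Λb, B.indicator (fun _ => (1 : ℝ)) (x - l))) * ∏ k, c k (x k) = 0 := by
    have hiA : Integrable (fun x : EuclideanSpace ℝ (Fin d) =>
        ∑ l ∈ Λa, A.indicator (fun _ => (1:ℝ)) (x - l) * ∏ k, c k (x k)) :=
      integrable_finset_sum _ fun l _ => brick_integrable a l c hc A hA
    have hiB : Integrable (fun x : EuclideanSpace ℝ (Fin d) =>
        ∑ l ∈ Λb, B.indicator (fun _ => (1:ℝ)) (x - l) * ∏ k, c k (x k)) :=
      integrable_finset_sum _ fun l _ => brick_integrable b l c hc B hB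
    simp_rw [add_mul, Finset.sum_mul]
    rw [integral_add hiA hiB, integral_finset_sum _ fun l _ =>
        brick_integrable a l c hc A hA,
      integral_finset_sum _ fun l _ => brick_integrable b l c hc B hB]
    simp [hAzero, hBzero]
  rw [hL] at hint
  -- RHS is nonzero
  have hR : ∫ x : EuclideanSpace ℝ (Fin d),
      Q.indicator (fun _ => (1:ℝ)) x * ∏ k, c k (x k)
      = ∏ k : Fin d, ∫ t in Set.Ioo ((0:ℝ) - 1 / 2) (0 + 1 / 2), c k t := by
    have := brick_integral (fun _ : Fin d => (1:ℝ)) 0 c Q hQ1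
    simp only [sub_zero] at this
    rw [this]
    rfl
  rw [hR] at hint
  have hne : (∏ k : Fin d, ∫ t in Set.Ioo ((0:ℝ) - 1 / 2) (0 + 1 / 2), c k t) ≠ 0 := by
    refine Finset.prod_ne_zero_iff.mpr fun k _ => ?_
    by_cases hki : k = i
    · rw [hki, hci]
      exact cos_Q_integral (ha i) (by push_neg; exact hai)
    · by_cases hkj : k = j
      · rw [hkj, hcj]
        exact cos_Q_integral (hb j) (by push_neg; exact hbj)
      · have hck : c k = fun _ => (1:ℝ) := by funext t; simp [hc_def, hki, hkj]
        rw [hck]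
        norm_num [Real.volume_Ioo]
  exact hne hint.symm
end

section
/- Suppose a trigonometric sum identity φ_a(ξ)·F_A(ξ) + φ_b(ξ)·F_B(ξ) = F_Q(ξ) holds for all ξ ∈ R^d, where F_A, F_B, F_Q are the Fourier transforms of the indicator functions of boxes A, B, Q respectively, and φ_a, φ_b are finite exponential sums. If 1/a_i ∉ Z and 1/b_j ∉ Z for some i ≠ j, then the left-hand side vanishes at some point where F_Q does not vanish, a contradiction; hence for every i ≠ j at least one of 1/a_i, 1/b_j is an integer. -/
open Real MeasureTheory
open scoped RealInnerProductSpace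

lemma box_fourier {d : ℕ} (s : Fin d → Set ℝ) (hs : ∀ k, MeasurableSet (s k))
    (ξ : EuclideanSpace ℝ (Fin d)) :
    FourierTransform.fourier (({x : EuclideanSpace ℝ (Fin d) | ∀ k, x k ∈ s k}).indicator
        (fun _ => (1 : ℂ))) ξ
      = ∏ k, ∫ x in s k, Complex.exp ((-2 * π * (ξ k) * Complex.I) * x) := by
  rw [Real.fourier_eq']
  rw [← ((EuclideanSpace.volume_preserving_symm_measurableEquiv_toLp (Fin d)).symm).integral_comp
    (MeasurableEquiv.measurableEmbedding _)]
  have hEq : ∀ y : Fin d → ℝ,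
      Complex.exp (↑(-2 * π * ⟪((MeasurableEquiv.toLp 2 (Fin d → ℝ)).symm.symm y), ξ⟫) * Complex.I) •
        (({x : EuclideanSpace ℝ (Fin d) | ∀ k, x k ∈ s k}).indicator (fun _ => (1 : ℂ)))
          ((MeasurableEquiv.toLp 2 (Fin d → ℝ)).symm.symm y)
      = ∏ k, (Set.indicator (s k) (fun _ => (1 : ℂ)) (y k) *
          Complex.exp ((-2 * π * (ξ k) * Complex.I) * (y k))) := by
    intro y
    have hcoord : ∀ k, ((MeasurableEquiv.toLp 2 (Fin d → ℝ)).symm.symm y) k = y k := fun _ => rfl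
    by_cases hy : ∀ k, y k ∈ s k
    · have hmem : ((MeasurableEquiv.toLp 2 (Fin d → ℝ)).symm.symm y) ∈
          {x : EuclideanSpace ℝ (Fin d) | ∀ k, x k ∈ s k} := by
        intro k; rw [hcoord]; exact hy k
      rw [Set.indicator_of_mem hmem]
      simp only [smul_eq_mul, mul_one]
      have : ∀ k, Set.indicator (s k) (fun _ => (1:ℂ)) (y k) = 1 := fun k =>
        Set.indicator_of_mem (hy k) _
      simp only [this, one_mul]
      rw [← Complex.exp_sum]
      congr 1
      simp only [PiLp.inner_apply, RCLike.inner_apply, conj_trivial, hcoord]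
      push_cast
      rw [Finset.mul_sum, Finset.sum_mul]
      congr 1; funext k; ring
    · push_neg at hy
      obtain ⟨k, hk⟩ := hy
      have hmem : ((MeasurableEquiv.toLp 2 (Fin d → ℝ)).symm.symm y) ∉
          {x : EuclideanSpace ℝ (Fin d) | ∀ k, x k ∈ s k} := by
        intro hmem; exact hk (by simpa [hcoord] using hmem k)
      rw [Set.indicator_of_notMem hmem]
      rw [smul_zero]
      rw [Finset.prod_eq_zero (Finset.mem_univ k)]
      rw [Set.indicator_of_notMem hk, zero_mul]
  simp only [Function.comp_def]
  rw [integral_congr_ae (Filter.Eventually.of_forall hEq)]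
  rw [MeasureTheory.integral_fintype_prod_volume_eq_prod (f := fun k (x : ℝ) =>
    Set.indicator (s k) (fun _ => (1 : ℂ)) x * Complex.exp ((-2 * π * (ξ k) * Complex.I) * x))]
  congr 1; funext k
  have : (fun x : ℝ => Set.indicator (s k) (fun _ => (1:ℂ)) x *
      Complex.exp ((-2 * π * (ξ k) * Complex.I) * x)) =
      Set.indicator (s k) (fun x : ℝ => Complex.exp ((-2 * π * (ξ k) * Complex.I) * x)) := by
    funext x; by_cases hx : x ∈ s k <;> simp [hx]
  rw [this, MeasureTheory.integral_indicator (hs k)]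

lemma oneD_exp_integral (t L : ℝ) (ht : t ≠ 0) (hL : 0 ≤ L) :
    ∫ x in Set.Ioo (-L/2) (L/2), Complex.exp ((-2 * π * t * Complex.I) * x)
      = Complex.sin (π * t * L) / (π * t) := by
  rw [← MeasureTheory.integral_Ioc_eq_integral_Ioo,
    ← intervalIntegral.integral_of_le (by linarith : -L/2 ≤ L/2)]
  have hc : (-2 * (π:ℂ) * t * Complex.I) ≠ 0 := by
    simp [Complex.ext_iff, Real.pi_ne_zero, ht]
  rw [integral_exp_mul_complex hc]
  have hπ : (π:ℂ) ≠ 0 := by exact_mod_cast Real.pi_ne_zero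
  have htC : (t:ℂ) ≠ 0 := by exact_mod_cast ht
  rw [Complex.sin]
  push_cast
  field_simp
  ring_nf
  rw [Complex.I_sq]
  ring_nf

lemma oneD_exp_integral_zero (L : ℝ) (hL : 0 ≤ L) :
    ∫ x in Set.Ioo (-L/2) (L/2), Complex.exp ((-2 * π * (0:ℝ) * Complex.I) * x) = (L : ℂ) := by
  simp only [Complex.ofReal_zero, mul_zero, zero_mul, mul_comm, Complex.exp_zero]
  simp [Real.volume_Ioo, ENNReal.toReal_ofReal, show L/2 - -L/2 = L by ring, hL]

/-- If the Fourier-side identity `φ_a · F_A + φ_b · F_B = F_Q` holds everywhere, where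
`F_A, F_B, F_Q` are the Fourier transforms of the indicators of the boxes `A`, `B`, `Q`
and `φ_a, φ_b` are finite exponential sums, then for every `i ≠ j` at least one of
`1 / a i`, `1 / b j` is an integer. -/
theorem fourier_identity_forces_integrality (d : ℕ) (hd : 2 ≤ d)
    (a b : Fin d → ℝ) (ha : ∀ j, 0 < a j) (hb : ∀ j, 0 < b j)
    (A B Q : Set (EuclideanSpace ℝ (Fin d)))
    (hA : A = {x : EuclideanSpace ℝ (Fin d) | ∀ j, x j ∈ Set.Ioo (-(a j) / 2) (a j / 2)})
    (hB : B = {x : EuclideanSpace ℝ (Fin d) | ∀ j, x j ∈ Set.Ioo (-(b j) / 2) (b j / 2)})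
    (hQ : Q = {x : EuclideanSpace ℝ (Fin d) | ∀ j, x j ∈ Set.Ioo (-(1 : ℝ) / 2) (1 / 2)})
    (Λa Λb : Finset (EuclideanSpace ℝ (Fin d)))
    (hid : ∀ ξ : EuclideanSpace ℝ (Fin d),
      (∑ l ∈ Λa, Complex.exp (2 * π * Complex.I * (⟪l, ξ⟫ : ℝ))) *
        FourierTransform.fourier (A.indicator (fun _ => (1 : ℂ))) ξ +
      (∑ l ∈ Λb, Complex.exp (2 * π * Complex.I * (⟪l, ξ⟫ : ℝ))) *
        FourierTransform.fourier (B.indicator (fun _ => (1 : ℂ))) ξ =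
      FourierTransform.fourier (Q.indicator (fun _ => (1 : ℂ))) ξ) :
    ∀ i j : Fin d, i ≠ j →
      (∃ n : ℤ, (a i)⁻¹ = n) ∨ (∃ n : ℤ, (b j)⁻¹ = n) := by
  intro i j hij
  by_contra hcon
  push_neg at hcon
  obtain ⟨hna, hnb⟩ := hcon
  set ξ : EuclideanSpace ℝ (Fin d) :=
    WithLp.toLp 2 (fun k => if k = i then (a i)⁻¹ else if k = j then (b j)⁻¹ else 0) with hξ
  have hξi : ξ i = (a i)⁻¹ := by simp [hξ]
  have hξj : ξ j = (b j)⁻¹ := by simp [hξ, hij.symm]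
  have hai : (a i)⁻¹ ≠ 0 := inv_ne_zero (ha i).ne'
  have hbj : (b j)⁻¹ ≠ 0 := inv_ne_zero (hb j).ne'
  -- F_A ξ = 0
  have hFA : FourierTransform.fourier (A.indicator (fun _ => (1 : ℂ))) ξ = 0 := by
    rw [hA, box_fourier _ (fun k => measurableSet_Ioo) ξ]
    apply Finset.prod_eq_zero (Finset.mem_univ i)
    rw [oneD_exp_integral _ _ (hξi ▸ hai) (ha i).le]
    have haC : ((a i : ℂ)) ≠ 0 := by exact_mod_cast (ha i).ne'
    have hz : ((π:ℂ) * (ξ i : ℝ) * (a i : ℝ)) = (π:ℂ) := by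
      rw [hξi]; push_cast; field_simp
    rw [hz]
    simp [← Complex.ofReal_sin, Real.sin_pi]
  have hFB : FourierTransform.fourier (B.indicator (fun _ => (1 : ℂ))) ξ = 0 := by
    rw [hB, box_fourier _ (fun k => measurableSet_Ioo) ξ]
    apply Finset.prod_eq_zero (Finset.mem_univ j)
    rw [oneD_exp_integral _ _ (hξj ▸ hbj) (hb j).le]
    have hbC : ((b j : ℂ)) ≠ 0 := by exact_mod_cast (hb j).ne'
    have hz : ((π:ℂ) * (ξ j : ℝ) * (b j : ℝ)) = (π:ℂ) := by
      rw [hξj]; push_cast; field_simp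
    rw [hz]
    simp [← Complex.ofReal_sin, Real.sin_pi]
  -- F_Q ξ ≠ 0
  have hsin : ∀ t : ℝ, (¬∃ n : ℤ, t = (n:ℝ)) → Complex.sin (π * t * 1) / (π * t) ≠ 0 := by
    intro t hnt
    have ht0 : t ≠ 0 := fun h => hnt ⟨0, by simp [h]⟩
    have hs : Real.sin (π * t) ≠ 0 := by
      intro hs
      rw [Real.sin_eq_zero_iff] at hs
      obtain ⟨n, hn⟩ := hs
      exact hnt ⟨n, by
        have := mul_right_cancel₀ Real.pi_ne_zero (by linarith [hn] : (n:ℝ) * π = t * π)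
        linarith⟩
    have h1 : Complex.sin (π * t * 1) ≠ 0 := by
      rw [mul_one]
      rw [show ((π:ℂ) * t) = ((π * t : ℝ) : ℂ) by push_cast; ring, ← Complex.ofReal_sin]
      exact_mod_cast hs
    have h2 : ((π:ℂ) * t) ≠ 0 := by
      push_cast
      exact mul_ne_zero (by exact_mod_cast Real.pi_ne_zero) (by exact_mod_cast ht0)
    exact div_ne_zero h1 h2
  have hFQ : FourierTransform.fourier (Q.indicator (fun _ => (1 : ℂ))) ξ ≠ 0 := by
    rw [hQ]
    have : {x : EuclideanSpace ℝ (Fin d) | ∀ k, x k ∈ Set.Ioo (-(1:ℝ) / 2) (1 / 2)} =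
        {x : EuclideanSpace ℝ (Fin d) | ∀ k, x k ∈ (fun _ : Fin d => Set.Ioo (-(1:ℝ)/2) (1/2)) k} :=
      rfl
    rw [this, box_fourier _ (fun k => measurableSet_Ioo) ξ]
    apply Finset.prod_ne_zero_iff.mpr
    intro k _
    by_cases hk : ξ k = 0
    · rw [hk]
      rw [oneD_exp_integral_zero 1 zero_le_one]
      norm_num
    · rw [oneD_exp_integral _ _ hk zero_le_one]
      have hknotint : ¬∃ n : ℤ, ξ k = (n:ℝ) := by
        rcases eq_or_ne k i with rfl | hki
        · rw [hξi]; exact fun ⟨n, hn⟩ => hna n hn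
        rcases eq_or_ne k j with rfl | hkj
        · rw [hξj]; exact fun ⟨n, hn⟩ => hnb n hn
        · exfalso; apply hk; simp [hξ, hki, hkj]
      exact hsin _ hknotint
  have := hid ξ
  rw [hFA, hFB, mul_zero, mul_zero, add_zero] at this
  exact hFQ this.symm
end

section
/- If translates of bricks A = ∏_j (-a_j/2,a_j/2) and B = ∏_j (-b_j/2,b_j/2) tile Q = (-1/2,1/2)^d, and neither 1/a_j ∈ Z for all j nor 1/b_j ∈ Z for all j (i.e. neither brick alone tiles Q by the trivial grid tiling), then there exists an index k such that 1/a_j ∈ Z and 1/b_j ∈ Z for all j ≠ k. -/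
open MeasureTheory

section Aux

open Real

private lemma cosInt (α β u : ℝ) (hab : α ≤ β) (hu : u ≠ 0) :
    ∫ x in Set.Ioo α β, Real.cos (2 * π * u * x)
      = (Real.sin (2 * π * u * β) - Real.sin (2 * π * u * α)) / (2 * π * u) := by
  have h2 : (2 * π * u) ≠ 0 := by
    have := Real.pi_ne_zero
    positivity
  rw [← MeasureTheory.integral_Ioc_eq_integral_Ioo, ← intervalIntegral.integral_of_le hab]
  rw [show (fun x => Real.cos (2 * π * u * x)) = (fun x => Real.cos ((2 * π * u) * x)) from rfl]
  rw [intervalIntegral.integral_comp_mul_left Real.cos h2, integral_cos]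
  rw [smul_eq_mul]
  field_simp

private lemma cosInt0 (α β : ℝ) (hab : α ≤ β) :
    ∫ x in Set.Ioo α β, Real.cos (2 * π * 0 * x) = β - α := by
  simp [Real.volume_Ioo, ENNReal.toReal_ofReal (by linarith : (0:ℝ) ≤ β - α), hab]

private lemma intInd (α β u : ℝ) :
    Integrable (fun t : ℝ => (Set.Ioo α β).indicator (fun s => Real.cos (2 * π * u * s)) t) := by
  refine IntegrableOn.integrable_indicator ?_ measurableSet_Ioo
  exact ((Real.continuous_cos.comp (by continuity)).integrableOn_Icc).mono_set Set.Ioo_subset_Icc_self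

private lemma indProd {d : ℕ} (S : Fin d → Set ℝ) (g : Fin d → ℝ → ℝ) (x : Fin d → ℝ) :
    Set.indicator {y : Fin d → ℝ | ∀ j, y j ∈ S j} (fun _ => (1:ℝ)) x * ∏ j, g j (x j)
      = ∏ j, (S j).indicator (g j) (x j) := by
  by_cases h : ∀ j, x j ∈ S j
  · rw [Set.indicator_of_mem (show x ∈ {y : Fin d → ℝ | ∀ j, y j ∈ S j} from h), one_mul]
    exact Finset.prod_congr rfl fun j _ => (Set.indicator_of_mem (h j) _).symm
  · push_neg at h
    obtain ⟨j0, hj0⟩ := h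
    rw [Set.indicator_of_notMem (show x ∉ {y : Fin d → ℝ | ∀ j, y j ∈ S j} from fun hh => hj0 (hh j0)), zero_mul]
    exact (Finset.prod_eq_zero (Finset.mem_univ j0) (Set.indicator_of_notMem hj0 _)).symm

private lemma euclBox {d : ℕ} (α β u : Fin d → ℝ) :
    (∫ x : EuclideanSpace ℝ (Fin d),
        Set.indicator {y : EuclideanSpace ℝ (Fin d) | ∀ j, y j ∈ Set.Ioo (α j) (β j)}
          (fun _ => (1:ℝ)) x * ∏ j, Real.cos (2 * π * u j * (x j)))
      = ∏ j, ∫ t in Set.Ioo (α j) (β j), Real.cos (2 * π * u j * t) := by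
  have e := EuclideanSpace.volume_preserving_symm_measurableEquiv_toLp (Fin d)
  calc ∫ x : EuclideanSpace ℝ (Fin d),
        Set.indicator {y : EuclideanSpace ℝ (Fin d) | ∀ j, y j ∈ Set.Ioo (α j) (β j)}
          (fun _ => (1:ℝ)) x * ∏ j, Real.cos (2 * π * u j * (x j))
      = ∫ x : EuclideanSpace ℝ (Fin d),
          (fun y : Fin d → ℝ => ∏ j, (Set.Ioo (α j) (β j)).indicator
            (fun t => Real.cos (2 * π * u j * t)) (y j))
          ((MeasurableEquiv.toLp 2 (Fin d → ℝ)).symm x) := by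
        refine integral_congr_ae (Filter.Eventually.of_forall fun x => ?_)
        exact indProd (fun j => Set.Ioo (α j) (β j)) (fun j t => Real.cos (2 * π * u j * t)) (WithLp.ofLp x)
    _ = ∫ y : Fin d → ℝ, ∏ j, (Set.Ioo (α j) (β j)).indicator
            (fun t => Real.cos (2 * π * u j * t)) (y j) := e.integral_comp' (fun y => ∏ j, (Set.Ioo (α j) (β j)).indicator (fun t => Real.cos (2 * π * u j * t)) (y j))
    _ = ∏ j, ∫ t, (Set.Ioo (α j) (β j)).indicator (fun t => Real.cos (2 * π * u j * t)) t :=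
        MeasureTheory.integral_fintype_prod_eq_prod _
    _ = ∏ j, ∫ t in Set.Ioo (α j) (β j), Real.cos (2 * π * u j * t) := by
        exact Finset.prod_congr rfl fun j _ => integral_indicator measurableSet_Ioo

private lemma euclBoxInt {d : ℕ} (α β u : Fin d → ℝ) :
    Integrable (fun x : EuclideanSpace ℝ (Fin d) =>
        Set.indicator {y : EuclideanSpace ℝ (Fin d) | ∀ j, y j ∈ Set.Ioo (α j) (β j)}
          (fun _ => (1:ℝ)) x * ∏ j, Real.cos (2 * π * u j * (x j))) := by
  have hfe : (fun x : EuclideanSpace ℝ (Fin d) =>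
        Set.indicator {y : EuclideanSpace ℝ (Fin d) | ∀ j, y j ∈ Set.Ioo (α j) (β j)}
          (fun _ => (1:ℝ)) x * ∏ j, Real.cos (2 * π * u j * (x j)))
      = (fun y : Fin d → ℝ => ∏ j, (Set.Ioo (α j) (β j)).indicator
            (fun t => Real.cos (2 * π * u j * t)) (y j))
        ∘ (MeasurableEquiv.toLp 2 (Fin d → ℝ)).symm := by
    funext x
    exact indProd (fun j => Set.Ioo (α j) (β j)) (fun j t => Real.cos (2 * π * u j * t)) (WithLp.ofLp x)
  rw [hfe]
  rw [(EuclideanSpace.volume_preserving_symm_measurableEquiv_toLp (Fin d)).integrable_comp_emb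
    (MeasurableEquiv.toLp 2 (Fin d → ℝ)).symm.measurableEmbedding]
  exact Integrable.fintype_prod fun j => intInd (α j) (β j) (u j)

/-- Translating a centered box indicator. -/
private lemma indTrans {d : ℕ} (c : Fin d → ℝ) (l x : EuclideanSpace ℝ (Fin d)) :
    Set.indicator {y : EuclideanSpace ℝ (Fin d) | ∀ j, y j ∈ Set.Ioo (-(c j) / 2) (c j / 2)}
      (fun _ => (1:ℝ)) (x - l)
    = Set.indicator {y : EuclideanSpace ℝ (Fin d) | ∀ j, y j ∈ Set.Ioo (l j - c j / 2) (l j + c j / 2)}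
      (fun _ => (1:ℝ)) x := by
  have hm : ((x - l) ∈ {y : EuclideanSpace ℝ (Fin d) | ∀ j, y j ∈ Set.Ioo (-(c j) / 2) (c j / 2)})
      ↔ (x ∈ {y : EuclideanSpace ℝ (Fin d) | ∀ j, y j ∈ Set.Ioo (l j - c j / 2) (l j + c j / 2)}) := by
    simp only [Set.mem_setOf_eq, Set.mem_Ioo, PiLp.sub_apply]
    refine forall_congr' fun j => ?_
    constructor
    · rintro ⟨h1, h2⟩; constructor <;> linarith
    · rintro ⟨h1, h2⟩; constructor <;> linarith
  simp only [Set.indicator_apply]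
  exact if_congr hm rfl rfl

/-- The key integral identity obtained from the tiling. -/
private lemma tileKey {d : ℕ} (a b : Fin d → ℝ)
    (A B Q : Set (EuclideanSpace ℝ (Fin d)))
    (hA : A = {x : EuclideanSpace ℝ (Fin d) | ∀ j, x j ∈ Set.Ioo (-(a j) / 2) (a j / 2)})
    (hB : B = {x : EuclideanSpace ℝ (Fin d) | ∀ j, x j ∈ Set.Ioo (-(b j) / 2) (b j / 2)})
    (hQ : Q = {x : EuclideanSpace ℝ (Fin d) | ∀ j, x j ∈ Set.Ioo (-(1 : ℝ) / 2) (1 / 2)})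
    (Λa Λb : Finset (EuclideanSpace ℝ (Fin d)))
    (htile : ∀ᵐ x : EuclideanSpace ℝ (Fin d),
      (∑ l ∈ Λa, A.indicator (fun _ => (1 : ℝ)) (x - l)) +
      (∑ l ∈ Λb, B.indicator (fun _ => (1 : ℝ)) (x - l)) =
      Q.indicator (fun _ => (1 : ℝ)) x)
    (u : Fin d → ℝ) :
    (∑ l ∈ Λa, ∏ j, ∫ t in Set.Ioo (l j - a j / 2) (l j + a j / 2), Real.cos (2 * Real.pi * u j * t))
      + (∑ l ∈ Λb, ∏ j, ∫ t in Set.Ioo (l j - b j / 2) (l j + b j / 2), Real.cos (2 * Real.pi * u j * t))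
      = ∏ j, ∫ t in Set.Ioo (-(1:ℝ) / 2) ((1:ℝ) / 2), Real.cos (2 * Real.pi * u j * t) := by
  have hmule : ∀ᵐ x : EuclideanSpace ℝ (Fin d),
      ((∑ l ∈ Λa, A.indicator (fun _ => (1 : ℝ)) (x - l)) +
       (∑ l ∈ Λb, B.indicator (fun _ => (1 : ℝ)) (x - l))) * ∏ j, Real.cos (2 * Real.pi * u j * (x j)) =
      Q.indicator (fun _ => (1 : ℝ)) x * ∏ j, Real.cos (2 * Real.pi * u j * (x j)) := by
    filter_upwards [htile] with x hx
    rw [hx]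
  have hint := integral_congr_ae hmule
  have hRW : (fun x : EuclideanSpace ℝ (Fin d) =>
      ((∑ l ∈ Λa, A.indicator (fun _ => (1 : ℝ)) (x - l)) +
       (∑ l ∈ Λb, B.indicator (fun _ => (1 : ℝ)) (x - l))) * ∏ j, Real.cos (2 * Real.pi * u j * (x j)))
      = (fun x : EuclideanSpace ℝ (Fin d) =>
      (∑ l ∈ Λa, Set.indicator {y : EuclideanSpace ℝ (Fin d) | ∀ j, y j ∈ Set.Ioo (l j - a j / 2) (l j + a j / 2)}
          (fun _ => (1:ℝ)) x * ∏ j, Real.cos (2 * Real.pi * u j * (x j)))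
      + ∑ l ∈ Λb, Set.indicator {y : EuclideanSpace ℝ (Fin d) | ∀ j, y j ∈ Set.Ioo (l j - b j / 2) (l j + b j / 2)}
          (fun _ => (1:ℝ)) x * ∏ j, Real.cos (2 * Real.pi * u j * (x j))) := by
    funext x
    rw [add_mul, Finset.sum_mul, Finset.sum_mul]
    congr 1
    · refine Finset.sum_congr rfl fun l _ => ?_
      rw [hA, indTrans a l x]
    · refine Finset.sum_congr rfl fun l _ => ?_
      rw [hB, indTrans b l x]
  rw [hRW] at hint
  rw [integral_add (integrable_finset_sum _ fun l _ => euclBoxInt _ _ u)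
    (integrable_finset_sum _ fun l _ => euclBoxInt _ _ u),
    integral_finset_sum _ (fun l _ => euclBoxInt _ _ u),
    integral_finset_sum _ (fun l _ => euclBoxInt _ _ u)] at hint
  have hQint : ∫ x : EuclideanSpace ℝ (Fin d),
      Q.indicator (fun _ => (1 : ℝ)) x * ∏ j, Real.cos (2 * Real.pi * u j * (x j))
      = ∏ j, ∫ t in Set.Ioo (-(1:ℝ) / 2) ((1:ℝ) / 2), Real.cos (2 * Real.pi * u j * t) := by
    rw [hQ]
    exact euclBox (fun _ => -(1:ℝ) / 2) (fun _ => (1:ℝ) / 2) u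
  rw [hQint] at hint
  rw [← hint]
  congr 1
  · exact Finset.sum_congr rfl fun l _ => (euclBox _ _ u).symm
  · exact Finset.sum_congr rfl fun l _ => (euclBox _ _ u).symm






/-- Factor of a brick integral at the special frequency vanishes. -/
private lemma brickFactorZero (c l : ℝ) (hc : 0 < c) :
    ∫ t in Set.Ioo (l - c / 2) (l + c / 2), Real.cos (2 * π * c⁻¹ * t) = 0 := by
  have hcne : c ≠ 0 := hc.ne'
  rw [cosInt _ _ _ (by linarith) (inv_ne_zero hcne)]
  have h1 : 2 * π * c⁻¹ * (l + c / 2) = 2 * π * c⁻¹ * l + π := by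
    field_simp
  have h2 : 2 * π * c⁻¹ * (l - c / 2) = 2 * π * c⁻¹ * l - π := by
    field_simp
  rw [h1, h2, Real.sin_add_pi, Real.sin_sub_pi]
  simp

/-- The cube factor at a non-integer reciprocal frequency is nonzero. -/
private lemma cubeFactorNonzero (c : ℝ) (hc : 0 < c) (hnc : ∀ n : ℤ, c⁻¹ ≠ n) :
    ∫ t in Set.Ioo (-(1:ℝ) / 2) ((1:ℝ) / 2), Real.cos (2 * π * c⁻¹ * t) ≠ 0 := by
  have hcne : c ≠ 0 := hc.ne'
  have hicne : c⁻¹ ≠ 0 := inv_ne_zero hcne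
  rw [cosInt _ _ _ (by norm_num) hicne]
  have h1 : 2 * π * c⁻¹ * ((1:ℝ) / 2) = π * c⁻¹ := by ring
  have h2 : 2 * π * c⁻¹ * (-(1:ℝ) / 2) = -(π * c⁻¹) := by ring
  rw [h1, h2, Real.sin_neg, sub_neg_eq_add]
  have hs : Real.sin (π * c⁻¹) ≠ 0 := by
    intro h
    obtain ⟨n, hn⟩ := Real.sin_eq_zero_iff.mp h
    refine hnc n ?_
    have hπ : (π : ℝ) ≠ 0 := Real.pi_ne_zero
    have : π * (n : ℝ) = π * c⁻¹ := by linarith [hn]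
    exact (mul_left_cancel₀ hπ this).symm
  refine div_ne_zero ?_ ?_
  · intro h; apply hs; linarith
  · have hπ : (π : ℝ) ≠ 0 := Real.pi_ne_zero
    positivity

/-- The cube factor at frequency zero is one. -/
private lemma cubeFactorOne :
    ∫ t in Set.Ioo (-(1:ℝ) / 2) ((1:ℝ) / 2), Real.cos (2 * π * 0 * t) = 1 := by
  rw [cosInt0 _ _ (by norm_num)]
  norm_num

end Aux

/-- If bricks `A` and `B` tile the unit cube `Q = (-1/2,1/2)^d` and neither all `1 / a j`
nor all `1 / b j` are integers, then there is one index `k` such that `1 / a j` and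
`1 / b j` are integers for all `j ≠ k`. -/
theorem tiling_two_bricks_integrality_off_one_index (d : ℕ) (hd : 2 ≤ d)
    (a b : Fin d → ℝ) (ha : ∀ j, 0 < a j) (hb : ∀ j, 0 < b j)
    (A B Q : Set (EuclideanSpace ℝ (Fin d)))
    (hA : A = {x : EuclideanSpace ℝ (Fin d) | ∀ j, x j ∈ Set.Ioo (-(a j) / 2) (a j / 2)})
    (hB : B = {x : EuclideanSpace ℝ (Fin d) | ∀ j, x j ∈ Set.Ioo (-(b j) / 2) (b j / 2)})
    (hQ : Q = {x : EuclideanSpace ℝ (Fin d) | ∀ j, x j ∈ Set.Ioo (-(1 : ℝ) / 2) (1 / 2)})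
    (Λa Λb : Finset (EuclideanSpace ℝ (Fin d)))
    (htile : ∀ᵐ x : EuclideanSpace ℝ (Fin d),
      (∑ l ∈ Λa, A.indicator (fun _ => (1 : ℝ)) (x - l)) +
      (∑ l ∈ Λb, B.indicator (fun _ => (1 : ℝ)) (x - l)) =
      Q.indicator (fun _ => (1 : ℝ)) x)
    (hnota : ¬ ∀ j, ∃ n : ℤ, (a j)⁻¹ = n)
    (hnotb : ¬ ∀ j, ∃ n : ℤ, (b j)⁻¹ = n) :
    ∃ k : Fin d, ∀ j : Fin d, j ≠ k →
      (∃ n : ℤ, (a j)⁻¹ = n) ∧ (∃ n : ℤ, (b j)⁻¹ = n) := by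
  have core : ∀ i m : Fin d, i ≠ m → (∀ n : ℤ, (a i)⁻¹ ≠ n) → (∀ n : ℤ, (b m)⁻¹ ≠ n) → False := by
    intro i m him hai hbm
    set u : Fin d → ℝ := Function.update (Function.update (0 : Fin d → ℝ) i (a i)⁻¹) m (b m)⁻¹
      with hu
    have hui : u i = (a i)⁻¹ := by
      rw [hu, Function.update_of_ne him, Function.update_self]
    have hum : u m = (b m)⁻¹ := by rw [hu, Function.update_self]
    have hu0 : ∀ j, j ≠ i → j ≠ m → u j = 0 := by
      intro j hji hjm
      rw [hu, Function.update_of_ne hjm, Function.update_of_ne hji]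
      rfl
    have hkey := tileKey a b A B Q hA hB hQ Λa Λb htile u
    have hA0 : ∀ l ∈ Λa, (∏ j, ∫ t in Set.Ioo (l j - a j / 2) (l j + a j / 2),
        Real.cos (2 * Real.pi * u j * t)) = 0 := by
      intro l _
      refine Finset.prod_eq_zero (Finset.mem_univ i) ?_
      rw [hui]
      exact brickFactorZero (a i) (l i) (ha i)
    have hB0 : ∀ l ∈ Λb, (∏ j, ∫ t in Set.Ioo (l j - b j / 2) (l j + b j / 2),
        Real.cos (2 * Real.pi * u j * t)) = 0 := by
      intro l _
      refine Finset.prod_eq_zero (Finset.mem_univ m) ?_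
      rw [hum]
      exact brickFactorZero (b m) (l m) (hb m)
    rw [Finset.sum_eq_zero hA0, Finset.sum_eq_zero hB0, add_zero] at hkey
    obtain ⟨j, -, hj0⟩ := Finset.prod_eq_zero_iff.mp hkey.symm
    by_cases hji : j = i
    · rw [hji, hui] at hj0
      exact cubeFactorNonzero (a i) (ha i) hai hj0
    · by_cases hjm : j = m
      · rw [hjm, hum] at hj0
        exact cubeFactorNonzero (b m) (hb m) hbm hj0
      · rw [hu0 j hji hjm, cubeFactorOne] at hj0
        exact one_ne_zero hj0
  push_neg at hnota hnotb
  obtain ⟨i, hai⟩ := hnota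
  obtain ⟨m, hbm⟩ := hnotb
  have him : m = i := by
    by_contra h
    exact core i m (fun hh => h hh.symm) hai hbm
  rw [him] at hbm
  refine ⟨i, fun j hj => ⟨?_, ?_⟩⟩
  · by_contra h
    push_neg at h
    exact core j i hj h hbm
  · by_contra h
    push_neg at h
    exact core i j (fun hh => hj hh.symm) hai h
end

section
/- If translates of bricks A and B tile the unit cube Q = (-1/2,1/2)^d, then there exist nonnegative integers m, n such that m·a_1 + n·b_1 = 1. -/
open MeasureTheory

/-- If translates of bricks `A` and `B` tile the unit cube `Q = (-1/2,1/2)^d`, then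
`1 = m * a 0 + n * b 0` for some nonnegative integers `m`, `n`. -/
theorem tiling_two_bricks_first_side (d : ℕ) (hd : 1 ≤ d)
    (a b : Fin d → ℝ) (ha : ∀ j, 0 < a j) (hb : ∀ j, 0 < b j)
    (A B Q : Set (EuclideanSpace ℝ (Fin d)))
    (hA : A = {x : EuclideanSpace ℝ (Fin d) | ∀ j, x j ∈ Set.Ioo (-(a j) / 2) (a j / 2)})
    (hB : B = {x : EuclideanSpace ℝ (Fin d) | ∀ j, x j ∈ Set.Ioo (-(b j) / 2) (b j / 2)})
    (hQ : Q = {x : EuclideanSpace ℝ (Fin d) | ∀ j, x j ∈ Set.Ioo (-(1 : ℝ) / 2) (1 / 2)})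
    (Λa Λb : Finset (EuclideanSpace ℝ (Fin d)))
    (htile : ∀ᵐ x : EuclideanSpace ℝ (Fin d),
      (∑ l ∈ Λa, A.indicator (fun _ => (1 : ℝ)) (x - l)) +
      (∑ l ∈ Λb, B.indicator (fun _ => (1 : ℝ)) (x - l)) =
      Q.indicator (fun _ => (1 : ℝ)) x) :
    ∃ m n : ℕ, (m : ℝ) * a ⟨0, hd⟩ + (n : ℝ) * b ⟨0, hd⟩ = 1 := by
  classical
  obtain ⟨N, rfl⟩ : ∃ N, d = N + 1 := ⟨d - 1, by omega⟩
  set e1 := (MeasurableEquiv.toLp 2 (Fin (N + 1) → ℝ)).symm with he1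
  set e2 := MeasurableEquiv.piFinSuccAbove (fun _ : Fin (N + 1) => ℝ) 0 with he2
  set Y : ℝ → (Fin N → ℝ) → EuclideanSpace ℝ (Fin (N + 1)) :=
    fun t z => e1.symm (e2.symm (t, z)) with hYdef
  have hY0 : ∀ t z, Y t z 0 = t := by
    intro t z
    simp [hYdef, he1, he2, MeasurableEquiv.coe_toLp,
      MeasurableEquiv.piFinSuccAbove_symm_apply]
  have hYs : ∀ t z (j : Fin N), Y t z j.succ = z j := by
    intro t z j
    have h : (j.succ : Fin (N + 1)) = (0 : Fin (N + 1)).succAbove j := by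
      simp [Fin.succAbove_zero]
    rw [h]
    simp [hYdef, he1, he2, MeasurableEquiv.coe_toLp,
      MeasurableEquiv.piFinSuccAbove_symm_apply]
  -- transfer the a.e. tiling identity
  have hmp1 : MeasurePreserving e1.symm :=
    (EuclideanSpace.volume_preserving_symm_measurableEquiv_toLp (Fin (N + 1))).symm
  have step1 : ∀ᵐ y : Fin (N + 1) → ℝ,
      (∑ l ∈ Λa, A.indicator (fun _ => (1 : ℝ)) (e1.symm y - l)) +
      (∑ l ∈ Λb, B.indicator (fun _ => (1 : ℝ)) (e1.symm y - l)) =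
      Q.indicator (fun _ => (1 : ℝ)) (e1.symm y) :=
    hmp1.quasiMeasurePreserving.tendsto_ae.eventually htile
  have hmp2 := (measurePreserving_piFinSuccAbove (fun _ : Fin (N + 1) => (volume : Measure ℝ)) 0).symm
  rw [← volume_pi] at hmp2
  have step2 : ∀ᵐ q : ℝ × (Fin N → ℝ) ∂((volume : Measure ℝ).prod volume),
      (∑ l ∈ Λa, A.indicator (fun _ => (1 : ℝ)) (e1.symm (e2.symm q) - l)) +
      (∑ l ∈ Λb, B.indicator (fun _ => (1 : ℝ)) (e1.symm (e2.symm q) - l)) =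
      Q.indicator (fun _ => (1 : ℝ)) (e1.symm (e2.symm q)) :=
    hmp2.quasiMeasurePreserving.tendsto_ae.eventually step1
  have hsw : MeasurePreserving (Prod.swap : (Fin N → ℝ) × ℝ → ℝ × (Fin N → ℝ))
      ((volume : Measure (Fin N → ℝ)).prod volume) ((volume : Measure ℝ).prod volume) :=
    Measure.measurePreserving_swap
  have step3 := hsw.quasiMeasurePreserving.tendsto_ae.eventually step2
  have step4 := Measure.ae_ae_of_ae_prod step3
  -- pick a good tail point z
  set T : Set (Fin N → ℝ) := Set.univ.pi fun _ => Set.Ioo (-(1 : ℝ) / 2) (1 / 2) with hTdef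
  have hT : volume T = 1 := by
    rw [hTdef, volume_pi_pi]
    simp [Real.volume_Ioo]
    norm_num
  obtain ⟨z, hzT, hz⟩ : ∃ z, z ∈ T ∧ (∀ᵐ t : ℝ,
      (∑ l ∈ Λa, A.indicator (fun _ => (1 : ℝ)) (Y t z - l)) +
      (∑ l ∈ Λb, B.indicator (fun _ => (1 : ℝ)) (Y t z - l)) =
      Q.indicator (fun _ => (1 : ℝ)) (Y t z)) := by
    by_contra h
    push_neg at h
    have hsub : T ⊆ {z | ¬ (∀ᵐ t : ℝ,
        (∑ l ∈ Λa, A.indicator (fun _ => (1 : ℝ)) (Y t z - l)) +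
        (∑ l ∈ Λb, B.indicator (fun _ => (1 : ℝ)) (Y t z - l)) =
        Q.indicator (fun _ => (1 : ℝ)) (Y t z))} := fun z hzT' => Filter.not_eventually.mpr (h z hzT')
    have hbad : volume {z | ¬ (∀ᵐ t : ℝ,
        (∑ l ∈ Λa, A.indicator (fun _ => (1 : ℝ)) (Y t z - l)) +
        (∑ l ∈ Λb, B.indicator (fun _ => (1 : ℝ)) (Y t z - l)) =
        Q.indicator (fun _ => (1 : ℝ)) (Y t z))} = 0 := by
      have step4' : ∀ᵐ zz : Fin N → ℝ, (∀ᵐ t : ℝ,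
          (∑ l ∈ Λa, A.indicator (fun _ => (1 : ℝ)) (Y t zz - l)) +
          (∑ l ∈ Λb, B.indicator (fun _ => (1 : ℝ)) (Y t zz - l)) =
          Q.indicator (fun _ => (1 : ℝ)) (Y t zz)) := step4
      exact MeasureTheory.ae_iff.mp step4'
    have := measure_mono (μ := (volume : Measure (Fin N → ℝ))) hsub
    rw [hbad, hT] at this
    exact absurd this (by simp)
  have hzT' : ∀ j : Fin N, z j ∈ Set.Ioo (-(1 : ℝ) / 2) (1 / 2) := by
    intro j; exact hzT j (Set.mem_univ j)
  -- the 1-D picture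
  set SA := Λa.filter (fun l => ∀ j : Fin N,
    z j - l j.succ ∈ Set.Ioo (-(a j.succ) / 2) (a j.succ / 2)) with hSA
  set SB := Λb.filter (fun l => ∀ j : Fin N,
    z j - l j.succ ∈ Set.Ioo (-(b j.succ) / 2) (b j.succ / 2)) with hSB
  have key : ∀ (w : Fin (N + 1) → ℝ) (hw : ∀ j, 0 < w j)
      (S : Set (EuclideanSpace ℝ (Fin (N + 1))))
      (hS : S = {x : EuclideanSpace ℝ (Fin (N + 1)) |
        ∀ j, x j ∈ Set.Ioo (-(w j) / 2) (w j / 2)})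
      (Λ : Finset (EuclideanSpace ℝ (Fin (N + 1)))) (t : ℝ),
      (∑ l ∈ Λ, S.indicator (fun _ => (1 : ℝ)) (Y t z - l)) =
      ∑ l ∈ Λ.filter (fun l => ∀ j : Fin N,
          z j - l j.succ ∈ Set.Ioo (-(w j.succ) / 2) (w j.succ / 2)),
        (Set.Ioo (l 0 - w 0 / 2) (l 0 + w 0 / 2)).indicator (fun _ => (1 : ℝ)) t := by
    intro w hw S hS Λ t
    rw [Finset.sum_filter]
    refine Finset.sum_congr rfl fun l _ => ?_
    have hsub : ∀ i : Fin (N + 1), (Y t z - l) i = Y t z i - l i := fun i => rfl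
    by_cases hc : ∀ j : Fin N, z j - l j.succ ∈ Set.Ioo (-(w j.succ) / 2) (w j.succ / 2)
    · rw [if_pos hc]
      by_cases ht : t ∈ Set.Ioo (l 0 - w 0 / 2) (l 0 + w 0 / 2)
      · rw [Set.indicator_of_mem ht, Set.indicator_of_mem]
        rw [hS]
        intro i
        refine Fin.cases ?_ ?_ i
        · rw [hsub, hY0]
          obtain ⟨h1, h2⟩ := ht
          exact ⟨by linarith, by linarith⟩
        · intro j
          rw [hsub, hYs]
          exact hc j
      · rw [Set.indicator_of_notMem ht, Set.indicator_of_notMem]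
        intro hmem
        rw [hS] at hmem
        have h0 := hmem 0
        rw [hsub, hY0] at h0
        obtain ⟨h1, h2⟩ := h0
        exact ht ⟨by linarith, by linarith⟩
    · rw [if_neg hc, Set.indicator_of_notMem]
      intro hmem
      rw [hS] at hmem
      refine hc fun j => ?_
      have := hmem j.succ
      rwa [hsub, hYs] at this
  have hQind : ∀ t : ℝ, Q.indicator (fun _ => (1 : ℝ)) (Y t z) =
      (Set.Ioo (-(1 : ℝ) / 2) (1 / 2)).indicator (fun _ => (1 : ℝ)) t := by
    intro t
    by_cases ht : t ∈ Set.Ioo (-(1 : ℝ) / 2) (1 / 2)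
    · rw [Set.indicator_of_mem ht, Set.indicator_of_mem]
      rw [hQ]
      intro i
      refine Fin.cases ?_ ?_ i
      · rw [hY0]; exact ht
      · intro j; rw [hYs]; exact hzT' j
    · rw [Set.indicator_of_notMem ht, Set.indicator_of_notMem]
      intro hmem
      rw [hQ] at hmem
      have := hmem 0
      rw [hY0] at this
      exact ht this
  -- integrate
  have hIntInd : ∀ c₁ c₂ : ℝ, Integrable ((Set.Ioo c₁ c₂).indicator fun _ => (1 : ℝ)) :=
    fun c₁ c₂ =>
      (integrableOn_const measure_Ioo_lt_top.ne).integrable_indicator measurableSet_Ioo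
  have hIval : ∀ (c v : ℝ), 0 < v →
      ∫ t : ℝ, (Set.Ioo (c - v / 2) (c + v / 2)).indicator (fun _ => (1 : ℝ)) t = v := by
    intro c v hv
    rw [MeasureTheory.integral_indicator_const _ measurableSet_Ioo]
    simp [Real.volume_Ioo]
    linarith
  have heq : (fun t : ℝ =>
      (∑ l ∈ SA, (Set.Ioo (l 0 - a 0 / 2) (l 0 + a 0 / 2)).indicator (fun _ => (1 : ℝ)) t) +
      (∑ l ∈ SB, (Set.Ioo (l 0 - b 0 / 2) (l 0 + b 0 / 2)).indicator (fun _ => (1 : ℝ)) t))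
      =ᵐ[volume] (fun t : ℝ =>
        (Set.Ioo (-(1 : ℝ) / 2) (1 / 2)).indicator (fun _ => (1 : ℝ)) t) := by
    refine hz.mono fun t ht => ?_
    dsimp only
    rw [hSA, hSB, ← key a ha A hA Λa t, ← key b hb B hB Λb t, ht, hQind t]
  have hint := integral_congr_ae heq
  rw [integral_add (integrable_finset_sum _ fun l _ => hIntInd _ _)
      (integrable_finset_sum _ fun l _ => hIntInd _ _),
    integral_finset_sum _ (fun l _ => hIntInd _ _),
    integral_finset_sum _ (fun l _ => hIntInd _ _)] at hint
  have hsa : ∀ l ∈ SA,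
      ∫ t : ℝ, (Set.Ioo (l 0 - a 0 / 2) (l 0 + a 0 / 2)).indicator (fun _ => (1 : ℝ)) t = a 0 :=
    fun l _ => hIval (l 0) (a 0) (ha 0)
  have hsb : ∀ l ∈ SB,
      ∫ t : ℝ, (Set.Ioo (l 0 - b 0 / 2) (l 0 + b 0 / 2)).indicator (fun _ => (1 : ℝ)) t = b 0 :=
    fun l _ => hIval (l 0) (b 0) (hb 0)
  rw [Finset.sum_congr rfl hsa, Finset.sum_congr rfl hsb, Finset.sum_const, Finset.sum_const,
    nsmul_eq_mul, nsmul_eq_mul] at hint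
  have hrhs : ∫ t : ℝ, (Set.Ioo (-(1 : ℝ) / 2) (1 / 2)).indicator (fun _ => (1 : ℝ)) t = 1 := by
    rw [MeasureTheory.integral_indicator_const _ measurableSet_Ioo]
    simp [Real.volume_Ioo]
    norm_num
  rw [hrhs] at hint
  have h0 : (⟨0, hd⟩ : Fin (N + 1)) = 0 := by
    apply Fin.ext; simp
  refine ⟨SA.card, SB.card, ?_⟩
  rw [h0]
  linarith
end

section
/- (Bower–Michael) If translates of two bricks A and B tile a box Q in R^d, then Q can be split by a single hyperplane cut of the form x_j = α into two boxes Q_a and Q_b such that Q_a can be tiled by translates of A alone and Q_b by translates of B alone (one of the two boxes may be empty). -/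
open MeasureTheory

/-- `Brick d c` is the axis-aligned box `∏_j (0, c j)` in `ℝ^d`. -/
def Brick (d : ℕ) (c : Fin d → ℝ) : Set (EuclideanSpace ℝ (Fin d)) :=
  {x | ∀ j, x j ∈ Set.Ioo 0 (c j)}

/-- A set `S` can be tiled by translates of the set `C` (finitely many, possibly none). -/
def TilesBy (d : ℕ) (C S : Set (EuclideanSpace ℝ (Fin d))) : Prop :=
  ∃ Λ : Finset (EuclideanSpace ℝ (Fin d)),
    ∀ᵐ x : EuclideanSpace ℝ (Fin d),
      (∑ l ∈ Λ, C.indicator (fun _ => (1 : ℝ)) (x - l)) = S.indicator (fun _ => (1 : ℝ)) x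


open MeasureTheory Set Complex

noncomputable section

lemma int_ind_real (l u : ℝ) (h : l ≤ u) :
    ∫ t : ℝ, (Set.Ioo l u).indicator (fun _ => (1:ℝ)) t = u - l := by
  rw [MeasureTheory.integral_indicator measurableSet_Ioo]
  simp [Real.volume_Ioo, ENNReal.toReal_ofReal (sub_nonneg.2 h), h]

lemma integrable_ind_real (l u : ℝ) :
    Integrable (fun t : ℝ => (Set.Ioo l u).indicator (fun _ => (1:ℝ)) t) := by
  rw [integrable_indicator_iff measurableSet_Ioo]
  exact integrableOn_const (by simp [Real.volume_Ioo])

/-- complex exponential weight -/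
def cw (c : ℝ) (t : ℝ) : ℂ := Complex.exp ((2 * Real.pi * Complex.I / c) * t)

lemma cw_norm (c t : ℝ) : ‖cw c t‖ = 1 := by
  rw [cw, Complex.norm_exp]
  have : ((2 * Real.pi * Complex.I / c) * t).re = 0 := by
    simp [Complex.div_re, Complex.mul_re, Complex.mul_im]
  rw [this, Real.exp_zero]

lemma cw_continuous (c : ℝ) : Continuous (cw c) :=
  Complex.continuous_exp.comp (by continuity)

lemma integrable_ind_cw (l u c : ℝ) :
    Integrable (fun t : ℝ => ((Set.Ioo l u).indicator (fun _ => (1:ℂ)) t) * cw c t) := by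
  simp_rw [mul_comm]
  apply Integrable.bdd_mul ?_ ?_ (Filter.Eventually.of_forall fun t => le_of_eq (cw_norm c t))
  · rw [integrable_indicator_iff measurableSet_Ioo]
    exact integrableOn_const (by simp [Real.volume_Ioo])
  · exact (cw_continuous c).aestronglyMeasurable

lemma int_ind_cw (l u c : ℝ) (h : l ≤ u) (hc : c ≠ 0) :
    ∫ t : ℝ, ((Set.Ioo l u).indicator (fun _ => (1:ℂ)) t) * cw c t
      = (Complex.exp ((2 * Real.pi * Complex.I / c) * u)
          - Complex.exp ((2 * Real.pi * Complex.I / c) * l)) / (2 * Real.pi * Complex.I / c) := by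
  have hne : (2 * Real.pi * Complex.I / c : ℂ) ≠ 0 := by
    apply div_ne_zero
    · simp only [ne_eq, mul_eq_zero, Complex.I_ne_zero, or_false, OfNat.ofNat_ne_zero, false_or]
      exact_mod_cast Real.pi_ne_zero
    · exact_mod_cast hc
  have h1 : ∀ t : ℝ, ((Set.Ioo l u).indicator (fun _ => (1:ℂ)) t) * cw c t
      = (Set.Ioo l u).indicator (fun t => cw c t) t := by
    intro t
    by_cases ht : t ∈ Set.Ioo l u <;> simp [ht]
  simp_rw [h1]
  rw [MeasureTheory.integral_indicator measurableSet_Ioo,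
    ← MeasureTheory.integral_Ioc_eq_integral_Ioo, ← intervalIntegral.integral_of_le h]
  simp_rw [cw]
  rw [integral_exp_mul_complex hne]

lemma int_ind_cw_self (l c : ℝ) (hc : 0 < c) :
    ∫ t : ℝ, ((Set.Ioo l (l + c)).indicator (fun _ => (1:ℂ)) t) * cw c t = 0 := by
  rw [int_ind_cw l (l + c) c (by linarith) hc.ne']
  have : (2 * Real.pi * Complex.I / c) * (l + c : ℝ)
      = (2 * Real.pi * Complex.I / c) * l + 2 * Real.pi * Complex.I := by
    have hcC : (c : ℂ) ≠ 0 := by exact_mod_cast hc.ne'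
    push_cast
    field_simp
  rw [this, Complex.exp_add, Complex.exp_two_pi_mul_I, mul_one, sub_self, zero_div]

lemma int_ind_cw_eq_zero_iff (l u c : ℝ) (h : l ≤ u) (hc : 0 < c) :
    (∫ t : ℝ, ((Set.Ioo l u).indicator (fun _ => (1:ℂ)) t) * cw c t) = 0
      ↔ ∃ z : ℤ, u - l = z * c := by
  have hπ : (Real.pi : ℂ) ≠ 0 := by exact_mod_cast Real.pi_ne_zero
  have hcC : (c : ℂ) ≠ 0 := by exact_mod_cast hc.ne'
  have hne : (2 * Real.pi * Complex.I / c : ℂ) ≠ 0 := by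
    apply div_ne_zero
    · simp only [ne_eq, mul_eq_zero, Complex.I_ne_zero, or_false, OfNat.ofNat_ne_zero, false_or]
      exact hπ
    · exact hcC
  rw [int_ind_cw l u c h hc.ne', div_eq_zero_iff, or_iff_left hne, sub_eq_zero]
  constructor
  · intro heq
    have h2 : Complex.exp ((2 * Real.pi * Complex.I / c) * u - (2 * Real.pi * Complex.I / c) * l)
        = 1 := by
      rw [Complex.exp_sub, heq, div_self (Complex.exp_ne_zero _)]
    rw [Complex.exp_eq_one_iff] at h2
    obtain ⟨z, hz⟩ := h2
    refine ⟨z, ?_⟩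
    have : ((u - l : ℝ) : ℂ) = (z : ℂ) * c := by
      have h3 : (2 * Real.pi * Complex.I / c) * u - (2 * Real.pi * Complex.I / c) * l
          = (2 * Real.pi * Complex.I / c) * ((u : ℂ) - l) := by ring
      rw [h3] at hz
      field_simp at hz
      have h2πI : (2 * Real.pi * Complex.I : ℂ) ≠ 0 := by
        simp only [ne_eq, mul_eq_zero, Complex.I_ne_zero, or_false, OfNat.ofNat_ne_zero, false_or]
        exact hπ
      push_cast
      apply mul_left_cancel₀ h2πI
      linear_combination (2 * Real.pi * Complex.I) * hz
    exact_mod_cast this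
  · rintro ⟨z, hz⟩
    have : (2 * Real.pi * Complex.I / c) * u
        = (2 * Real.pi * Complex.I / c) * l + z * (2 * Real.pi * Complex.I) := by
      have : (u : ℂ) = l + z * c := by exact_mod_cast by linarith [hz]
      rw [this]
      field_simp
    rw [this, Complex.exp_add, Complex.exp_int_mul_two_pi_mul_I, mul_one]

open MeasureTheory Set


lemma ind_cast (S : Set ℝ) (t : ℝ) :
    ((S.indicator (fun _ => (1:ℝ)) t : ℝ) : ℂ) = S.indicator (fun _ => (1:ℂ)) t := by
  by_cases h : t ∈ S <;> simp [h]

lemma factA (d : ℕ) (a b lo hi : Fin d → ℝ) (ha : ∀ j, 0 < a j) (hb : ∀ j, 0 < b j)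
    (hlo : ∀ j, lo j < hi j)
    (Λa Λb : Finset (Fin d → ℝ))
    (htile : ∀ᵐ y : (Fin d → ℝ),
      (∑ l ∈ Λa, ∏ j, (Set.Ioo (l j) (l j + a j)).indicator (fun _ => (1:ℝ)) (y j)) +
      (∑ l ∈ Λb, ∏ j, (Set.Ioo (l j) (l j + b j)).indicator (fun _ => (1:ℝ)) (y j)) =
      ∏ j, (Set.Ioo (lo j) (hi j)).indicator (fun _ => (1:ℝ)) (y j))
    (j' k : Fin d) (hjk : j' ≠ k) :
    (∃ z : ℤ, hi j' - lo j' = z * a j') ∨ (∃ z : ℤ, hi k - lo k = z * b k) := by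
  classical
  set w : Fin d → ℝ → ℂ := fun j t => if j = j' then cw (a j') t else if j = k then cw (b k) t
    else 1 with hw
  have hwc : ∀ j, Continuous (w j) := by
    intro j
    rw [hw]
    dsimp only
    split_ifs
    · exact cw_continuous _
    · exact cw_continuous _
    · exact continuous_const
  have hwn : ∀ j t, ‖w j t‖ ≤ 1 := by
    intro j t
    rw [hw]
    dsimp only
    split_ifs
    · exact (cw_norm _ _).le
    · exact (cw_norm _ _).le
    · simp
  -- integrability of one factor
  have hfac_int : ∀ (lj uj : ℝ) (j : Fin d),
      Integrable (fun t : ℝ => (Set.Ioo lj uj).indicator (fun _ => (1:ℂ)) t * w j t) := by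
    intro lj uj j
    simp_rw [mul_comm]
    apply Integrable.bdd_mul ?_ ((hwc j).aestronglyMeasurable) (Filter.Eventually.of_forall fun t => hwn j t)
    rw [integrable_indicator_iff measurableSet_Ioo]
    exact integrableOn_const (by simp [Real.volume_Ioo])
  have hterm_int : ∀ (l c : Fin d → ℝ),
      Integrable (fun y : Fin d → ℝ =>
        ∏ j, (Set.Ioo (l j) (l j + c j)).indicator (fun _ => (1:ℂ)) (y j) * w j (y j)) :=
    fun l c => Integrable.fintype_prod_dep fun j => hfac_int _ _ j
  -- multiply the tiling identity by the weight and integrate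
  have hae : (fun y : Fin d → ℝ =>
        (∑ l ∈ Λa, ∏ j, (Set.Ioo (l j) (l j + a j)).indicator (fun _ => (1:ℂ)) (y j) * w j (y j))
      + (∑ l ∈ Λb, ∏ j, (Set.Ioo (l j) (l j + b j)).indicator (fun _ => (1:ℂ)) (y j) * w j (y j)))
      =ᵐ[volume] (fun y : Fin d → ℝ =>
        ∏ j, (Set.Ioo (lo j) (hi j)).indicator (fun _ => (1:ℂ)) (y j) * w j (y j)) := by
    filter_upwards [htile] with y hy
    have expand : ∀ (L : Finset (Fin d → ℝ)) (c : Fin d → ℝ),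
        ∑ l ∈ L, ∏ j, (Set.Ioo (l j) (l j + c j)).indicator (fun _ => (1:ℂ)) (y j) * w j (y j)
        = ((∑ l ∈ L, ∏ j, (Set.Ioo (l j) (l j + c j)).indicator (fun _ => (1:ℝ)) (y j) : ℝ) : ℂ)
          * ∏ j, w j (y j) := by
      intro L c
      push_cast
      rw [Finset.sum_mul]
      apply Finset.sum_congr rfl
      intro l _
      rw [← Finset.prod_mul_distrib]
      apply Finset.prod_congr rfl
      intro j _
      rw [ind_cast]
    rw [expand Λa a, expand Λb b, ← add_mul, ← Complex.ofReal_add, hy]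
    push_cast
    rw [← Finset.prod_mul_distrib]
    apply Finset.prod_congr rfl
    intro j _
    rw [ind_cast]
  have hint := MeasureTheory.integral_congr_ae hae
  rw [MeasureTheory.integral_add (integrable_finset_sum _ fun l _ => hterm_int l a)
    (integrable_finset_sum _ fun l _ => hterm_int l b),
    MeasureTheory.integral_finset_sum _ (fun l _ => hterm_int l a),
    MeasureTheory.integral_finset_sum _ (fun l _ => hterm_int l b)] at hint
  -- each translate integral vanishes
  have hA0 : ∀ l : Fin d → ℝ, (∫ y : Fin d → ℝ,
      ∏ j, (Set.Ioo (l j) (l j + a j)).indicator (fun _ => (1:ℂ)) (y j) * w j (y j)) = 0 := by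
    intro l
    rw [MeasureTheory.volume_pi, MeasureTheory.integral_fintype_prod_eq_prod
      (fun j t => (Set.Ioo (l j) (l j + a j)).indicator (fun _ => (1:ℂ)) t * w j t)]
    apply Finset.prod_eq_zero (Finset.mem_univ j')
    have : w j' = cw (a j') := by rw [hw]; simp
    rw [this]
    exact int_ind_cw_self (l j') (a j') (ha j')
  have hB0 : ∀ l : Fin d → ℝ, (∫ y : Fin d → ℝ,
      ∏ j, (Set.Ioo (l j) (l j + b j)).indicator (fun _ => (1:ℂ)) (y j) * w j (y j)) = 0 := by
    intro l
    rw [MeasureTheory.volume_pi, MeasureTheory.integral_fintype_prod_eq_prod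
      (fun j t => (Set.Ioo (l j) (l j + b j)).indicator (fun _ => (1:ℂ)) t * w j t)]
    apply Finset.prod_eq_zero (Finset.mem_univ k)
    have : w k = cw (b k) := by rw [hw]; simp [Ne.symm hjk]
    rw [this]
    exact int_ind_cw_self (l k) (b k) (hb k)
  simp only [hA0, hB0, Finset.sum_const_zero, add_zero] at hint
  rw [MeasureTheory.volume_pi, MeasureTheory.integral_fintype_prod_eq_prod
    (fun j t => (Set.Ioo (lo j) (hi j)).indicator (fun _ => (1:ℂ)) t * w j t)] at hint
  have hzero := hint.symm
  rw [Finset.prod_eq_zero_iff] at hzero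
  obtain ⟨j, _, hj⟩ := hzero
  by_cases hjj' : j = j'
  · subst hjj'
    left
    have : w j = cw (a j) := by rw [hw]; simp
    rw [this] at hj
    exact (int_ind_cw_eq_zero_iff (lo j) (hi j) (a j) (hlo j).le (ha j)).1 hj
  · by_cases hjk2 : j = k
    · subst hjk2
      right
      have : w j = cw (b j) := by rw [hw]; simp [hjj']
      rw [this] at hj
      exact (int_ind_cw_eq_zero_iff (lo j) (hi j) (b j) (hlo j).le (hb j)).1 hj
    · exfalso
      have : w j = fun _ => 1 := by rw [hw]; simp [hjj', hjk2]
      rw [this] at hj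
      simp_rw [mul_one] at hj
      rw [MeasureTheory.integral_indicator measurableSet_Ioo] at hj
      simp [Real.volume_Ioo] at hj
      have := sub_pos.2 (hlo j)
      exact absurd hj (not_le.2 (hlo j))



lemma ind_adjacent (s e u t : ℝ) (hse : s ≤ e) (heu : e ≤ u) (ht : t ≠ e) :
    (Set.Ioo s e).indicator (fun _ => (1:ℝ)) t + (Set.Ioo e u).indicator (fun _ => (1:ℝ)) t
      = (Set.Ioo s u).indicator (fun _ => (1:ℝ)) t := by
  rcases lt_or_gt_of_ne ht with h | h
  · have h1 : t ∉ Set.Ioo e u := by simp [Set.mem_Ioo]; intro h2; linarith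
    by_cases h2 : t ∈ Set.Ioo s e
    · have h3 : t ∈ Set.Ioo s u := ⟨h2.1, lt_of_lt_of_le h2.2 heu⟩
      simp [h1, h2, h3]
    · have h3 : t ∉ Set.Ioo s u := by
        simp only [Set.mem_Ioo, not_and_or, not_lt] at h2 ⊢
        rcases h2 with h2 | h2
        · exact Or.inl h2
        · exact absurd h2 (by push_neg; exact h)
      simp [h1, h2, h3]
  · have h1 : t ∉ Set.Ioo s e := by simp [Set.mem_Ioo]; intro h2; linarith
    by_cases h2 : t ∈ Set.Ioo e u
    · have h3 : t ∈ Set.Ioo s u := ⟨lt_of_le_of_lt hse h2.1, h2.2⟩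
      simp [h1, h2, h3]
    · have h3 : t ∉ Set.Ioo s u := by
        simp only [Set.mem_Ioo, not_and_or, not_lt] at h2 ⊢
        rcases h2 with h2 | h2
        · exact absurd h2 (by push_neg; exact h)
        · exact Or.inr h2
      simp [h1, h2, h3]

lemma grid_sum (l c : ℝ) (hc : 0 < c) (m : ℕ) (t : ℝ)
    (ht : ∀ i : ℕ, i ≤ m → t ≠ l + i * c) :
    ∑ i ∈ Finset.range m,
        (Set.Ioo (l + i * c) (l + (i + 1) * c)).indicator (fun _ => (1:ℝ)) t
      = (Set.Ioo l (l + m * c)).indicator (fun _ => (1:ℝ)) t := by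
  induction m with
  | zero => simp
  | succ m ih =>
    rw [Finset.sum_range_succ, ih (fun i hi => ht i (le_trans hi (Nat.le_succ m)))]
    have := ind_adjacent l (l + m * c) (l + (m + 1 : ℕ) * c) t
      (by nlinarith [Nat.cast_nonneg (α := ℝ) m]) (by push_cast; nlinarith) (ht m (Nat.le_succ m))
    push_cast at this ⊢
    linarith [this]

lemma ind_shift (s c t : ℝ) :
    (Set.Ioo 0 c).indicator (fun _ => (1:ℝ)) (t - s)
      = (Set.Ioo s (s + c)).indicator (fun _ => (1:ℝ)) t := by
  have : t - s ∈ Set.Ioo 0 c ↔ t ∈ Set.Ioo s (s + c) := by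
    simp only [Set.mem_Ioo]
    constructor <;> (rintro ⟨h1, h2⟩; constructor <;> linarith)
  by_cases h : t - s ∈ Set.Ioo 0 c
  · rw [Set.indicator_of_mem h, Set.indicator_of_mem (this.1 h)]
  · rw [Set.indicator_of_notMem h, Set.indicator_of_notMem (fun hh => h (this.2 hh))]

/-- indicator of a "box" set as a product of 1-d indicators, Euclidean version -/
lemma ind_box_E (d : ℕ) (T : Fin d → Set ℝ) (x : EuclideanSpace ℝ (Fin d)) :
    Set.indicator {y : EuclideanSpace ℝ (Fin d) | ∀ j, y j ∈ T j} (fun _ => (1:ℝ)) x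
      = ∏ j, (T j).indicator (fun _ => (1:ℝ)) (x j) := by
  by_cases h : x ∈ {y : EuclideanSpace ℝ (Fin d) | ∀ j, y j ∈ T j}
  · rw [Set.indicator_of_mem h, Finset.prod_eq_one]
    intro j _
    rw [Set.indicator_of_mem (h j)]
  · rw [Set.indicator_of_notMem h]
    have h' : ¬ ∀ j, x j ∈ T j := h
    push_neg at h'
    obtain ⟨j, hj⟩ := h'
    exact (Finset.prod_eq_zero (Finset.mem_univ j) (Set.indicator_of_notMem hj _)).symm

lemma ind_box_pi (d : ℕ) (T : Fin d → Set ℝ) (x : Fin d → ℝ) :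
    Set.indicator {y : Fin d → ℝ | ∀ j, y j ∈ T j} (fun _ => (1:ℝ)) x
      = ∏ j, (T j).indicator (fun _ => (1:ℝ)) (x j) := by
  by_cases h : x ∈ {y : Fin d → ℝ | ∀ j, y j ∈ T j}
  · rw [Set.indicator_of_mem h, Finset.prod_eq_one]
    intro j _
    rw [Set.indicator_of_mem (h j)]
  · rw [Set.indicator_of_notMem h]
    have h' : ¬ ∀ j, x j ∈ T j := h
    push_neg at h'
    obtain ⟨j, hj⟩ := h'
    exact (Finset.prod_eq_zero (Finset.mem_univ j) (Set.indicator_of_notMem hj _)).symm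

/-- If every side of a box is a natural multiple of the brick side, the brick tiles the box. -/
lemma tilesBy_box (d : ℕ) (c : Fin d → ℝ) (hc : ∀ j, 0 < c j) (l u : Fin d → ℝ)
    (m : Fin d → ℕ) (hm : ∀ j, u j = l j + m j * c j) :
    TilesBy d (Brick d c) {x : EuclideanSpace ℝ (Fin d) | ∀ j, x j ∈ Set.Ioo (l j) (u j)} := by
  classical
  refine ⟨(Fintype.piFinset fun j => Finset.range (m j)).image
    (fun k => (WithLp.equiv 2 _).symm (fun j => l j + k j * c j)), ?_⟩
  -- a.e. statement in the pi space
  have hae : ∀ᵐ y : (Fin d → ℝ), ∀ j, ∀ i : ℕ, i ≤ m j → y j ≠ l j + i * c j := by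
    rw [ae_all_iff]
    intro j
    rw [ae_all_iff]
    intro i
    by_cases hi : i ≤ m j
    · simp only [hi, forall_true_left]
      rw [MeasureTheory.volume_pi]
      exact MeasureTheory.Measure.ae_eval_ne _ j _
    · filter_upwards with y h
      exact absurd h hi
  have key : ∀ y : (Fin d → ℝ), (∀ j, ∀ i : ℕ, i ≤ m j → y j ≠ l j + i * c j) →
      ∑ k ∈ Fintype.piFinset (fun j => Finset.range (m j)),
          ∏ j, (Set.Ioo (l j + k j * c j) (l j + k j * c j + c j)).indicator
            (fun _ => (1:ℝ)) (y j)
        = ∏ j, (Set.Ioo (l j) (u j)).indicator (fun _ => (1:ℝ)) (y j) := by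
    intro y hy
    rw [← Finset.prod_univ_sum (fun j => Finset.range (m j))
      (fun j i => (Set.Ioo (l j + (i:ℝ) * c j) (l j + (i:ℝ) * c j + c j)).indicator
        (fun _ => (1:ℝ)) (y j))]
    congr 1
    funext j
    have : ∀ i : ℕ, (Set.Ioo (l j + i * c j) (l j + i * c j + c j))
        = (Set.Ioo (l j + i * c j) (l j + (i + 1) * c j)) := by
      intro i; congr 1; ring
    calc ∑ i ∈ Finset.range (m j),
          (Set.Ioo (l j + i * c j) (l j + i * c j + c j)).indicator (fun _ => (1:ℝ)) (y j)
        = ∑ i ∈ Finset.range (m j),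
          (Set.Ioo (l j + i * c j) (l j + (i+1) * c j)).indicator (fun _ => (1:ℝ)) (y j) := by
          apply Finset.sum_congr rfl; intro i _; rw [this i]
      _ = (Set.Ioo (l j) (l j + m j * c j)).indicator (fun _ => (1:ℝ)) (y j) :=
          grid_sum (l j) (c j) (hc j) (m j) (y j) (hy j)
      _ = (Set.Ioo (l j) (u j)).indicator (fun _ => (1:ℝ)) (y j) := by rw [← hm j]
  -- transfer to Euclidean space
  have mp := EuclideanSpace.volume_preserving_symm_measurableEquiv_toLp (Fin d)
  have tendsto := mp.quasiMeasurePreserving.tendsto_ae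
  have hae2 : ∀ᵐ x : EuclideanSpace ℝ (Fin d),
      ∀ j, ∀ i : ℕ, i ≤ m j → (MeasurableEquiv.toLp 2 (Fin d → ℝ)).symm x j ≠ l j + i * c j :=
    tendsto.eventually hae
  filter_upwards [hae2] with x hx
  have hx' : ∀ j, ∀ i : ℕ, i ≤ m j → x j ≠ l j + i * c j := by
    intro j i hi
    have := hx j i hi
    exact this
  -- compute the sum
  rw [Finset.sum_image]
  · have eq1 : ∀ k : Fin d → ℕ,
        (Brick d c).indicator (fun _ => (1:ℝ))
          (x - (WithLp.equiv 2 (Fin d → ℝ)).symm (fun j => l j + k j * c j))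
        = ∏ j, (Set.Ioo (l j + k j * c j) (l j + k j * c j + c j)).indicator
            (fun _ => (1:ℝ)) (x j) := by
      intro k
      rw [show (Brick d c) = {y : EuclideanSpace ℝ (Fin d) | ∀ j, y j ∈ Set.Ioo 0 (c j)} from rfl,
        ind_box_E]
      congr 1
      funext j
      have hxy : (x - (WithLp.equiv 2 (Fin d → ℝ)).symm (fun j => l j + k j * c j)) j
          = x j - (l j + k j * c j) := by
        simp [PiLp.sub_apply]
      rw [hxy, ind_shift]
    simp_rw [eq1]
    rw [key (fun j => x j) hx']
    rw [show {x_1 : EuclideanSpace ℝ (Fin d) | ∀ (j : Fin d), x_1 j ∈ Set.Ioo (l j) (u j)}.indicator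
      (fun _ => (1:ℝ)) x = _ from ind_box_E d (fun j => Set.Ioo (l j) (u j)) x]
  · intro k1 h1 k2 h2 heq
    funext j
    have := congrFun (congrArg (WithLp.equiv 2 (Fin d → ℝ)) heq) j
    simp only [Equiv.apply_symm_apply] at this
    have : (k1 j : ℝ) * c j = k2 j * c j := by linarith
    have := mul_right_cancel₀ (hc j).ne' this
    exact_mod_cast this

lemma factB (d : ℕ) (a b lo hi : Fin d → ℝ) (ha : ∀ j, 0 < a j) (hb : ∀ j, 0 < b j)
    (hlo : ∀ j, lo j < hi j)
    (Λa Λb : Finset (Fin d → ℝ))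
    (htile : ∀ᵐ y : (Fin d → ℝ),
      (∑ l ∈ Λa, ∏ j, (Set.Ioo (l j) (l j + a j)).indicator (fun _ => (1:ℝ)) (y j)) +
      (∑ l ∈ Λb, ∏ j, (Set.Ioo (l j) (l j + b j)).indicator (fun _ => (1:ℝ)) (y j)) =
      ∏ j, (Set.Ioo (lo j) (hi j)).indicator (fun _ => (1:ℝ)) (y j))
    (j₀ : Fin d) :
    ∃ m n : ℕ, hi j₀ - lo j₀ = m * a j₀ + n * b j₀ := by
  classical
  set p : Fin d → Prop := fun j => j ≠ j₀ with hp
  haveI : DecidablePred p := Classical.decPred p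
  letI hU : Unique {j // ¬ p j} :=
    ⟨⟨⟨j₀, not_not_intro rfl⟩⟩, fun x => Subtype.ext (not_not.mp x.2)⟩
  set e := MeasurableEquiv.piEquivPiSubtypeProd (fun _ : Fin d => ℝ) p with he
  have mpe := MeasureTheory.volume_preserving_piEquivPiSubtypeProd (fun _ : Fin d => ℝ) p
  have h1 := (MeasurePreserving.symm e mpe).quasiMeasurePreserving.tendsto_ae.eventually htile
  rw [MeasureTheory.Measure.volume_eq_prod] at h1
  have h2 := MeasureTheory.Measure.ae_ae_of_ae_prod h1
  -- the box in the subtype-pi space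
  set box : Set ({j // p j} → ℝ) := {z | ∀ jj : {j // p j}, z jj ∈ Set.Ioo (lo jj) (hi jj)}
    with hbox
  have hboxm : MeasurableSet box := by
    have : box = Set.pi Set.univ (fun jj : {j // p j} => Set.Ioo (lo jj.1) (hi jj.1)) := by
      ext z; simp [hbox, Set.mem_pi]
    rw [this]
    exact MeasurableSet.univ_pi fun jj => measurableSet_Ioo
  have hboxpos : 0 < volume box := by
    have : box = Set.pi Set.univ (fun jj : {j // p j} => Set.Ioo (lo jj.1) (hi jj.1)) := by
      ext z; simp [hbox, Set.mem_pi]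
    rw [this, MeasureTheory.volume_pi, MeasureTheory.Measure.pi_pi]
    refine CanonicallyOrderedAdd.prod_pos.2 fun jj _ => ?_
    rw [Real.volume_Ioo]
    exact ENNReal.ofReal_pos.2 (sub_pos.2 (hlo _))
  -- choose a good base point
  have hnon : ∃ z, z ∈ box ∧ (∀ᵐ tt : ({j // ¬ p j} → ℝ),
      ∑ l ∈ Λa, ∏ j, (Set.Ioo (l j) (l j + a j)).indicator (fun _ => (1:ℝ)) (e.symm (z, tt) j) +
      ∑ l ∈ Λb, ∏ j, (Set.Ioo (l j) (l j + b j)).indicator (fun _ => (1:ℝ)) (e.symm (z, tt) j) =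
      ∏ j, (Set.Ioo (lo j) (hi j)).indicator (fun _ => (1:ℝ)) (e.symm (z, tt) j)) := by
    by_contra hcon
    push_neg at hcon
    have hsub : box ⊆ {z | ¬ (∀ᵐ tt : ({j // ¬ p j} → ℝ),
        ∑ l ∈ Λa, ∏ j, (Set.Ioo (l j) (l j + a j)).indicator (fun _ => (1:ℝ)) (e.symm (z, tt) j) +
        ∑ l ∈ Λb, ∏ j, (Set.Ioo (l j) (l j + b j)).indicator (fun _ => (1:ℝ)) (e.symm (z, tt) j) =
        ∏ j, (Set.Ioo (lo j) (hi j)).indicator (fun _ => (1:ℝ)) (e.symm (z, tt) j))} := by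
      intro z hz
      exact Filter.not_eventually.2 (hcon z hz)
    have hz0 : volume {z : {j // p j} → ℝ | ¬ (∀ᵐ tt : ({j // ¬ p j} → ℝ),
        ∑ l ∈ Λa, ∏ j, (Set.Ioo (l j) (l j + a j)).indicator (fun _ => (1:ℝ)) (e.symm (z, tt) j) +
        ∑ l ∈ Λb, ∏ j, (Set.Ioo (l j) (l j + b j)).indicator (fun _ => (1:ℝ)) (e.symm (z, tt) j) =
        ∏ j, (Set.Ioo (lo j) (hi j)).indicator (fun _ => (1:ℝ)) (e.symm (z, tt) j))} = 0 :=
      h2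
    exact absurd (measure_mono_null hsub hz0) hboxpos.ne'
  obtain ⟨z, hzbox, hz⟩ := hnon
  -- transfer the inner a.e. statement to ℝ
  have mpu := MeasureTheory.volume_preserving_piUnique (fun _ : {j // ¬ p j} => ℝ)
  have h4 := (MeasurePreserving.symm _ mpu).quasiMeasurePreserving.tendsto_ae.eventually hz
  -- pointwise splitting of products
  have hj₀ : ¬ p j₀ := by simp [hp]
  have split : ∀ (f : Fin d → ℝ → ℝ) (t : ℝ),
      ∏ j, f j (e.symm (z, (MeasurableEquiv.piUnique (fun _ : {j // ¬ p j} => ℝ)).symm t) j)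
        = (∏ jj : Subtype p, f jj.1 (z jj)) * f j₀ t := by
    intro f t
    rw [← Fintype.prod_subtype_mul_prod_subtype p
      (fun j => f j (e.symm (z, (MeasurableEquiv.piUnique (fun _ : {j // ¬ p j} => ℝ)).symm t) j))]
    congr 1
    · apply Finset.prod_congr rfl
      intro jj _
      congr 1
      show (Equiv.piEquivPiSubtypeProd p (fun _ : Fin d => ℝ)).symm _ jj.1 = z jj
      rw [Equiv.piEquivPiSubtypeProd_symm_apply, dif_pos jj.2]
    · rw [Fintype.prod_unique (fun jj : {j // ¬ p j} =>
        f jj.1 (e.symm (z, (MeasurableEquiv.piUnique (fun _ : {j // ¬ p j} => ℝ)).symm t) jj.1))]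
      have hdef : (default : {j // ¬ p j}) = ⟨j₀, hj₀⟩ := rfl
      rw [hdef]
      congr 1
      show (Equiv.piEquivPiSubtypeProd p (fun _ : Fin d => ℝ)).symm _ j₀ = t
      rw [Equiv.piEquivPiSubtypeProd_symm_apply, dif_neg hj₀]
      rfl
  -- rewrite the a.e. statement in 1-d form
  have h5 : ∀ᵐ t : ℝ,
      (∑ l ∈ Λa, (∏ jj : Subtype p, (Set.Ioo (l jj.1) (l jj.1 + a jj.1)).indicator
          (fun _ => (1:ℝ)) (z jj)) * (Set.Ioo (l j₀) (l j₀ + a j₀)).indicator (fun _ => (1:ℝ)) t) +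
      (∑ l ∈ Λb, (∏ jj : Subtype p, (Set.Ioo (l jj.1) (l jj.1 + b jj.1)).indicator
          (fun _ => (1:ℝ)) (z jj)) * (Set.Ioo (l j₀) (l j₀ + b j₀)).indicator (fun _ => (1:ℝ)) t) =
      (Set.Ioo (lo j₀) (hi j₀)).indicator (fun _ => (1:ℝ)) t := by
    filter_upwards [h4] with t ht
    have hQ1 : (∏ jj : Subtype p, (Set.Ioo (lo jj.1) (hi jj.1)).indicator
        (fun _ => (1:ℝ)) (z jj)) = 1 := by
      apply Finset.prod_eq_one
      intro jj _
      exact Set.indicator_of_mem (hzbox jj) _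
    calc _ = ∑ l ∈ Λa, ∏ j, (Set.Ioo (l j) (l j + a j)).indicator (fun _ => (1:ℝ))
            (e.symm (z, (MeasurableEquiv.piUnique (fun _ : {j // ¬ p j} => ℝ)).symm t) j) +
          ∑ l ∈ Λb, ∏ j, (Set.Ioo (l j) (l j + b j)).indicator (fun _ => (1:ℝ))
            (e.symm (z, (MeasurableEquiv.piUnique (fun _ : {j // ¬ p j} => ℝ)).symm t) j) := by
          congr 1
          · apply Finset.sum_congr rfl; intro l _; rw [split]
          · apply Finset.sum_congr rfl; intro l _; rw [split]
      _ = ∏ j, (Set.Ioo (lo j) (hi j)).indicator (fun _ => (1:ℝ))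
            (e.symm (z, (MeasurableEquiv.piUnique (fun _ : {j // ¬ p j} => ℝ)).symm t) j) := ht
      _ = _ := by rw [split]; rw [hQ1, one_mul]
  -- integrate
  have hintL : ∀ (Λ : Finset (Fin d → ℝ)) (c : Fin d → ℝ), (∀ j, 0 < c j) →
      ∫ t : ℝ, ∑ l ∈ Λ, (∏ jj : Subtype p, (Set.Ioo (l jj.1) (l jj.1 + c jj.1)).indicator
          (fun _ => (1:ℝ)) (z jj)) * (Set.Ioo (l j₀) (l j₀ + c j₀)).indicator (fun _ => (1:ℝ)) t
      = ∑ l ∈ Λ, (∏ jj : Subtype p, (Set.Ioo (l jj.1) (l jj.1 + c jj.1)).indicator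
          (fun _ => (1:ℝ)) (z jj)) * c j₀ := by
    intro Λ c hc
    rw [MeasureTheory.integral_finset_sum]
    · apply Finset.sum_congr rfl
      intro l _
      rw [MeasureTheory.integral_const_mul, int_ind_real _ _ (by linarith [hc j₀])]
      ring
    · intro l _
      exact (integrable_ind_real _ _).const_mul _
  have key := MeasureTheory.integral_congr_ae h5
  rw [MeasureTheory.integral_add, hintL Λa a ha, hintL Λb b hb,
    int_ind_real _ _ (hlo j₀).le] at key
  · -- convert the coefficient sums to naturals
    have hcoef : ∀ (Λ : Finset (Fin d → ℝ)) (c : Fin d → ℝ),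
        ∃ m : ℕ, (∑ l ∈ Λ, (∏ jj : Subtype p, (Set.Ioo (l jj.1) (l jj.1 + c jj.1)).indicator
          (fun _ => (1:ℝ)) (z jj)) * c j₀) = (m : ℝ) * c j₀ := by
      intro Λ c
      refine ⟨(Λ.filter (fun l => ∀ jj : Subtype p, z jj ∈ Set.Ioo (l jj.1) (l jj.1 + c jj.1))).card, ?_⟩
      rw [← Finset.sum_mul]
      congr 1
      rw [← Finset.sum_boole]
      apply Finset.sum_congr rfl
      intro l _
      by_cases hl : ∀ jj : Subtype p, z jj ∈ Set.Ioo (l jj.1) (l jj.1 + c jj.1)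
      · rw [if_pos hl]
        exact Finset.prod_eq_one fun jj _ => Set.indicator_of_mem (hl jj) _
      · rw [if_neg hl]
        push_neg at hl
        obtain ⟨jj, hjj⟩ := hl
        exact Finset.prod_eq_zero (Finset.mem_univ jj) (Set.indicator_of_notMem hjj _)
    obtain ⟨m, hm⟩ := hcoef Λa a
    obtain ⟨n, hn⟩ := hcoef Λb b
    rw [hm, hn] at key
    exact ⟨m, n, by linarith [key]⟩
  · apply MeasureTheory.integrable_finset_sum
    intro l _
    exact (integrable_ind_real _ _).const_mul _
  · apply MeasureTheory.integrable_finset_sum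
    intro l _
    exact (integrable_ind_real _ _).const_mul _


lemma tilesBy_empty (d : ℕ) (C : Set (EuclideanSpace ℝ (Fin d)))
    (S : Set (EuclideanSpace ℝ (Fin d))) (hS : S = ∅) : TilesBy d C S := by
  refine ⟨∅, ?_⟩
  filter_upwards with x
  simp [hS]

/-- (Bower–Michael) If translates of two bricks `A` and `B` tile a box `Q`, then a single
hyperplane cut `x j = α` splits `Q` into a box tileable by `A` alone and a box tileable
by `B` alone. -/
theorem bower_michael (d : ℕ) (hd : 1 ≤ d)
    (a b : Fin d → ℝ) (ha : ∀ j, 0 < a j) (hb : ∀ j, 0 < b j)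
    (lo hi : Fin d → ℝ) (hlo : ∀ j, lo j < hi j)
    (Q : Set (EuclideanSpace ℝ (Fin d)))
    (hQ : Q = {x : EuclideanSpace ℝ (Fin d) | ∀ j, x j ∈ Set.Ioo (lo j) (hi j)})
    (Λa Λb : Finset (EuclideanSpace ℝ (Fin d)))
    (htile : ∀ᵐ x : EuclideanSpace ℝ (Fin d),
      (∑ l ∈ Λa, (Brick d a).indicator (fun _ => (1 : ℝ)) (x - l)) +
      (∑ l ∈ Λb, (Brick d b).indicator (fun _ => (1 : ℝ)) (x - l)) =
      Q.indicator (fun _ => (1 : ℝ)) x) :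
    ∃ (j : Fin d) (α : ℝ), lo j ≤ α ∧ α ≤ hi j ∧
      TilesBy d (Brick d a) {x ∈ Q | x j < α} ∧
      TilesBy d (Brick d b) {x ∈ Q | α < x j} := by
  classical
  -- transfer tiling hypothesis to the pi space
  set Λa' : Finset (Fin d → ℝ) := Λa.image (fun l => (fun j => l j)) with hΛa'
  set Λb' : Finset (Fin d → ℝ) := Λb.image (fun l => (fun j => l j)) with hΛb'
  have hinj : Function.Injective (fun (l : EuclideanSpace ℝ (Fin d)) => (fun j => l j : Fin d → ℝ)) := by
    intro u v h
    ext j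
    exact congrFun h j
  have mpE := EuclideanSpace.volume_preserving_symm_measurableEquiv_toLp (Fin d)
  have h0 := (MeasurePreserving.symm _ mpE).quasiMeasurePreserving.tendsto_ae.eventually htile
  have htile_pi : ∀ᵐ y : (Fin d → ℝ),
      (∑ l ∈ Λa', ∏ j, (Set.Ioo (l j) (l j + a j)).indicator (fun _ => (1:ℝ)) (y j)) +
      (∑ l ∈ Λb', ∏ j, (Set.Ioo (l j) (l j + b j)).indicator (fun _ => (1:ℝ)) (y j)) =
      ∏ j, (Set.Ioo (lo j) (hi j)).indicator (fun _ => (1:ℝ)) (y j) := by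
    filter_upwards [h0] with y hy
    have hcoord : ∀ j : Fin d, ((MeasurableEquiv.toLp 2 (Fin d → ℝ)).symm.symm y) j = y j :=
      fun j => rfl
    have hsub : ∀ (l : EuclideanSpace ℝ (Fin d)) (j : Fin d),
        ((MeasurableEquiv.toLp 2 (Fin d → ℝ)).symm.symm y - l) j = y j - l j := fun l j => rfl
    have hterm : ∀ (l : EuclideanSpace ℝ (Fin d)) (c : Fin d → ℝ),
        (Brick d c).indicator (fun _ => (1:ℝ))
          ((MeasurableEquiv.toLp 2 (Fin d → ℝ)).symm.symm y - l)
        = ∏ j, (Set.Ioo (l j) (l j + c j)).indicator (fun _ => (1:ℝ)) (y j) := by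
      intro l c
      rw [show (Brick d c) = {x : EuclideanSpace ℝ (Fin d) | ∀ j, x j ∈ Set.Ioo 0 (c j)} from rfl,
        ind_box_E]
      apply Finset.prod_congr rfl
      intro j _
      rw [hsub l j, ind_shift]
    have hQterm : Q.indicator (fun _ => (1:ℝ)) ((MeasurableEquiv.toLp 2 (Fin d → ℝ)).symm.symm y)
        = ∏ j, (Set.Ioo (lo j) (hi j)).indicator (fun _ => (1:ℝ)) (y j) := by
      rw [hQ, ind_box_E]
      exact Finset.prod_congr rfl fun j _ => rfl
    rw [hΛa', hΛb', Finset.sum_image (fun u _ v _ h => hinj h),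
      Finset.sum_image (fun u _ v _ h => hinj h)]
    calc ∑ l ∈ Λa, ∏ j, (Set.Ioo (l j) (l j + a j)).indicator (fun _ => (1:ℝ)) (y j)
          + ∑ l ∈ Λb, ∏ j, (Set.Ioo (l j) (l j + b j)).indicator (fun _ => (1:ℝ)) (y j)
        = (∑ l ∈ Λa, (Brick d a).indicator (fun _ => (1:ℝ))
              ((MeasurableEquiv.toLp 2 (Fin d → ℝ)).symm.symm y - l))
          + ∑ l ∈ Λb, (Brick d b).indicator (fun _ => (1:ℝ))
              ((MeasurableEquiv.toLp 2 (Fin d → ℝ)).symm.symm y - l) := by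
          congr 1
          · exact Finset.sum_congr rfl fun l _ => (hterm l a).symm
          · exact Finset.sum_congr rfl fun l _ => (hterm l b).symm
      _ = Q.indicator (fun _ => (1:ℝ)) ((MeasurableEquiv.toLp 2 (Fin d → ℝ)).symm.symm y) := hy
      _ = _ := hQterm
  -- divisibility predicates
  set P : Fin d → Prop := fun j => ∃ z : ℕ, hi j = lo j + z * a j with hP
  set Qd : Fin d → Prop := fun j => ∃ z : ℕ, hi j = lo j + z * b j with hQd
  have hfactA : ∀ j' k : Fin d, j' ≠ k → P j' ∨ Qd k := by
    intro j' k hjk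
    rcases factA d a b lo hi ha hb hlo Λa' Λb' htile_pi j' k hjk with ⟨z, hz⟩ | ⟨z, hz⟩
    · left
      have hzpos : 0 < z := by
        by_contra h
        push_neg at h
        have hzr : (z : ℝ) ≤ 0 := by exact_mod_cast h
        nlinarith [hlo j', ha j', hz]
      refine ⟨z.toNat, ?_⟩
      have hcast : ((z.toNat : ℕ) : ℝ) = ((z : ℤ) : ℝ) := by
        exact_mod_cast congrArg (Int.cast : ℤ → ℝ) (Int.toNat_of_nonneg hzpos.le)
      rw [hcast]
      linarith [hz]
    · right
      have hzpos : 0 < z := by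
        by_contra h
        push_neg at h
        have hzr : (z : ℝ) ≤ 0 := by exact_mod_cast h
        nlinarith [hlo k, hb k, hz]
      refine ⟨z.toNat, ?_⟩
      have hcast : ((z.toNat : ℕ) : ℝ) = ((z : ℤ) : ℝ) := by
        exact_mod_cast congrArg (Int.cast : ℤ → ℝ) (Int.toNat_of_nonneg hzpos.le)
      rw [hcast]
      linarith [hz]
  -- helper to conclude
  by_cases hallP : ∀ j, P j
  · -- Q is tiled by A alone; cut at the top
    refine ⟨⟨0, hd⟩, hi ⟨0, hd⟩, (hlo _).le, le_refl _, ?_, ?_⟩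
    · have hset : {x ∈ Q | x ⟨0, hd⟩ < hi ⟨0, hd⟩}
          = {x : EuclideanSpace ℝ (Fin d) | ∀ j, x j ∈ Set.Ioo (lo j) (hi j)} := by
        ext x
        simp only [Set.mem_setOf_eq, Set.mem_sep_iff, hQ]
        exact ⟨fun h => h.1, fun h => ⟨h, (h ⟨0, hd⟩).2⟩⟩
      rw [hset]
      exact tilesBy_box d a ha lo hi (fun j => (hallP j).choose)
        (fun j => by have := (hallP j).choose_spec; linarith [this])
    · apply tilesBy_empty
      rw [hQ]
      ext x
      simp only [Set.mem_sep_iff, Set.mem_setOf_eq, Set.mem_empty_iff_false, iff_false, not_and]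
      intro hx
      exact not_lt.2 (hx ⟨0, hd⟩).2.le
  · push_neg at hallP
    obtain ⟨j₀, hj₀P⟩ := hallP
    have hQall : ∀ k, k ≠ j₀ → Qd k := by
      intro k hk
      rcases hfactA j₀ k (Ne.symm hk) with h | h
      · exact absurd h hj₀P
      · exact h
    by_cases hQ0 : Qd j₀
    · -- Q is tiled by B alone; cut at the bottom
      have hallQ : ∀ j, Qd j := by
        intro j
        by_cases hj : j = j₀
        · rwa [hj]
        · exact hQall j hj
      refine ⟨j₀, lo j₀, le_refl _, (hlo _).le, ?_, ?_⟩
      · apply tilesBy_empty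
        rw [hQ]
        ext x
        simp only [Set.mem_sep_iff, Set.mem_setOf_eq, Set.mem_empty_iff_false, iff_false, not_and]
        intro hx
        exact not_lt.2 (hx j₀).1.le
      · have hset : {x ∈ Q | lo j₀ < x j₀}
            = {x : EuclideanSpace ℝ (Fin d) | ∀ j, x j ∈ Set.Ioo (lo j) (hi j)} := by
          ext x
          simp only [Set.mem_setOf_eq, Set.mem_sep_iff, hQ]
          exact ⟨fun h => h.1, fun h => ⟨h, (h j₀).1⟩⟩
        rw [hset]
        exact tilesBy_box d b hb lo hi (fun j => (hallQ j).choose)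
          (fun j => by have := (hallQ j).choose_spec; linarith [this])
    · -- mixed case: cut coordinate j₀
      have hPall : ∀ j, j ≠ j₀ → P j := by
        intro j hj
        rcases hfactA j j₀ hj with h | h
        · exact h
        · exact absurd h hQ0
      obtain ⟨m, n, hmn⟩ := factB d a b lo hi ha hb hlo Λa' Λb' htile_pi j₀
      set α : ℝ := lo j₀ + m * a j₀ with hα
      have hα1 : lo j₀ ≤ α := by
        rw [hα]
        nlinarith [ha j₀, Nat.cast_nonneg (α := ℝ) m]
      have hα2 : α ≤ hi j₀ := by
        rw [hα]
        nlinarith [hb j₀, Nat.cast_nonneg (α := ℝ) n, hmn]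
      refine ⟨j₀, α, hα1, hα2, ?_, ?_⟩
      · -- left piece tiled by A
        have hset : {x ∈ Q | x j₀ < α}
            = {x : EuclideanSpace ℝ (Fin d) | ∀ j, x j ∈ Set.Ioo (lo j)
                (Function.update hi j₀ α j)} := by
          ext x
          simp only [Set.mem_setOf_eq, Set.mem_sep_iff, hQ]
          constructor
          · rintro ⟨hx, hxα⟩ j
            by_cases hj : j = j₀
            · subst hj
              rw [Function.update_self]
              exact ⟨(hx j).1, hxα⟩
            · rw [Function.update_of_ne hj]
              exact hx j
          · intro hx
            refine ⟨fun j => ?_, ?_⟩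
            · by_cases hj : j = j₀
              · subst hj
                have := hx j
                rw [Function.update_self] at this
                exact ⟨this.1, lt_of_lt_of_le this.2 hα2⟩
              · have := hx j
                rwa [Function.update_of_ne hj] at this
            · have := hx j₀
              rw [Function.update_self] at this
              exact this.2
        rw [hset]
        refine tilesBy_box d a ha lo (Function.update hi j₀ α)
          (fun j => if hj : j = j₀ then m else (hPall j hj).choose) (fun j => ?_)
        by_cases hj : j = j₀
        · subst hj
          simp only [Function.update_self, dif_pos]
          exact hα
        · simp only [Function.update_of_ne hj, dif_neg hj]
          have := (hPall j hj).choose_spec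
          linarith [this]
      · -- right piece tiled by B
        have hset : {x ∈ Q | α < x j₀}
            = {x : EuclideanSpace ℝ (Fin d) | ∀ j, x j ∈ Set.Ioo
                (Function.update lo j₀ α j) (hi j)} := by
          ext x
          simp only [Set.mem_setOf_eq, Set.mem_sep_iff, hQ]
          constructor
          · rintro ⟨hx, hxα⟩ j
            by_cases hj : j = j₀
            · subst hj
              rw [Function.update_self]
              exact ⟨hxα, (hx j).2⟩
            · rw [Function.update_of_ne hj]
              exact hx j
          · intro hx
            refine ⟨fun j => ?_, ?_⟩
            · by_cases hj : j = j₀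
              · subst hj
                have := hx j
                rw [Function.update_self] at this
                exact ⟨lt_of_le_of_lt hα1 this.1, this.2⟩
              · have := hx j
                rwa [Function.update_of_ne hj] at this
            · have := hx j₀
              rw [Function.update_self] at this
              exact this.1
        rw [hset]
        refine tilesBy_box d b hb (Function.update lo j₀ α) hi
          (fun j => if hj : j = j₀ then n else (hQall j hj).choose) (fun j => ?_)
        by_cases hj : j = j₀
        · subst hj
          simp only [Function.update_self, dif_pos]
          rw [hα]
          push_cast
          linarith [hmn]
        · simp only [Function.update_of_ne hj, dif_neg hj]
          have := (hQall j hj).choose_spec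
          linarith [this]
end
end

section
/- A brick with dimensions (c_1,...,c_d) tiles the unit cube (0,1)^d by translations if and only if 1/c_j is a (positive) integer for every j = 1,...,d. -/
open MeasureTheory

lemma cast_ind (s : Set ℝ) (t : ℝ) :
    ((s.indicator (fun _ => (1 : ℝ)) t : ℝ) : ℂ) = s.indicator (fun _ => (1 : ℂ)) t := by
  by_cases h : t ∈ s <;> simp [h]

lemma box_indicator_eq_prod {d : ℕ} (a b : Fin d → ℝ) (x : EuclideanSpace ℝ (Fin d)) :
    ({y : EuclideanSpace ℝ (Fin d) | ∀ j, y j ∈ Set.Ioo (a j) (b j)}).indicator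
        (fun _ => (1 : ℝ)) x
      = ∏ j, (Set.Ioo (a j) (b j)).indicator (fun _ => (1 : ℝ)) (x j) := by
  simp [Set.indicator_apply, Finset.prod_boole]

lemma sub_box_indicator_eq_prod {d : ℕ} (cc : Fin d → ℝ) (l x : EuclideanSpace ℝ (Fin d)) :
    ({y : EuclideanSpace ℝ (Fin d) | ∀ j, y j ∈ Set.Ioo 0 (cc j)}).indicator
        (fun _ => (1 : ℝ)) (x - l)
      = ∏ j, (Set.Ioo (l j) (l j + cc j)).indicator (fun _ => (1 : ℝ)) (x j) := by
  rw [box_indicator_eq_prod (fun _ => 0) cc (x - l)]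
  refine Finset.prod_congr rfl fun j _ => ?_
  have h : (x - l) j = x j - l j := rfl
  rw [h]
  simp only [Set.indicator_apply, Set.mem_Ioo]
  refine if_congr ?_ rfl rfl
  constructor <;> intro h' <;> constructor <;> linarith [h'.1, h'.2]

set_option maxHeartbeats 1000000 in
lemma mp_dir (d : ℕ) (c : Fin d → ℝ) (hc : ∀ j, 0 < c j)
    (Λ : Finset (EuclideanSpace ℝ (Fin d)))
    (hΛ : ∀ᵐ x : EuclideanSpace ℝ (Fin d),
      (∑ l ∈ Λ, ({y : EuclideanSpace ℝ (Fin d) | ∀ j, y j ∈ Set.Ioo 0 (c j)}).indicator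
          (fun _ => (1 : ℝ)) (x - l)) =
      ({y : EuclideanSpace ℝ (Fin d) | ∀ j, y j ∈ Set.Ioo 0 1}).indicator
        (fun _ => (1 : ℝ)) x)
    (j : Fin d) : ∃ n : ℕ, 0 < n ∧ (c j)⁻¹ = n := by
  classical
  have hcj : (0 : ℝ) < c j := hc j
  have hcjC : (c j : ℂ) ≠ 0 := by exact_mod_cast hcj.ne'
  set z : ℂ := ((2 * Real.pi / c j : ℝ) : ℂ) * Complex.I with hzdef
  have hz0 : z ≠ 0 := by
    rw [hzdef]
    apply mul_ne_zero _ Complex.I_ne_zero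
    simp only [ne_eq, Complex.ofReal_eq_zero]
    positivity
  have hzc : z * (c j : ℂ) = 2 * (Real.pi : ℂ) * Complex.I := by
    rw [hzdef, show (((2 * Real.pi / c j : ℝ) : ℂ)) = 2 * (Real.pi : ℂ) / (c j : ℂ) by
      push_cast; ring]
    field_simp
  -- the test functions
  set g : Fin d → ℝ → ℂ := fun k t =>
    if k = j then Complex.exp (z * t) else (Set.Ioo (0 : ℝ) 1).indicator (fun _ => (1 : ℂ)) t
    with hgdef
  have hgnorm : ∀ k t, ‖g k t‖ ≤ 1 := by
    intro k t
    rw [hgdef]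
    by_cases hk : k = j
    · simp only [hk, if_pos]
      rw [show z * (t : ℂ) = ((2 * Real.pi / c j * t : ℝ) : ℂ) * Complex.I by
        rw [hzdef]; push_cast; ring]
      rw [Complex.norm_exp_ofReal_mul_I]
    · simp only [hk, if_neg, ite_false]
      by_cases ht : t ∈ Set.Ioo (0:ℝ) 1 <;> simp [ht]
  have hgmeas : ∀ k, AEStronglyMeasurable (g k) volume := by
    intro k
    rw [hgdef]
    by_cases hk : k = j
    · simp only [hk, if_pos]
      exact (Complex.continuous_exp.comp (by continuity)).aestronglyMeasurable
    · simp only [hk, ite_false]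
      exact ((aestronglyMeasurable_const).indicator measurableSet_Ioo)
  -- integrability of a 1D brick factor against g
  have hInt : ∀ (a b : ℝ) (k : Fin d),
      Integrable (fun t => (Set.Ioo a b).indicator (fun _ => (1 : ℂ)) t * g k t) := by
    intro a b k
    have heq : (fun t => (Set.Ioo a b).indicator (fun _ => (1 : ℂ)) t * g k t)
        = (Set.Ioo a b).indicator (g k) := by
      funext t
      by_cases ht : t ∈ Set.Ioo a b <;> simp [ht]
    rw [heq]
    rw [integrable_indicator_iff measurableSet_Ioo]
    exact Measure.integrableOn_of_bounded (by simp) (hgmeas k)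
      (Filter.Eventually.of_forall fun t => hgnorm k t)
  -- the key per-interval vanishing integral
  have hvanish : ∀ a : ℝ,
      (∫ t : ℝ, (Set.Ioo a (a + c j)).indicator (fun _ => (1 : ℂ)) t * g j t) = 0 := by
    intro a
    have heq : (fun t : ℝ => (Set.Ioo a (a + c j)).indicator (fun _ => (1 : ℂ)) t * g j t)
        = (Set.Ioo a (a + c j)).indicator (fun t => Complex.exp (z * t)) := by
      funext t
      by_cases ht : t ∈ Set.Ioo a (a + c j) <;> simp [ht, hgdef]
    rw [heq, integral_indicator measurableSet_Ioo, ← integral_Ioc_eq_integral_Ioo,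
      ← intervalIntegral.integral_of_le (by linarith : a ≤ a + c j),
      integral_exp_mul_complex hz0]
    have : Complex.exp (z * ((a : ℝ) + c j : ℝ)) = Complex.exp (z * a) := by
      push_cast
      rw [mul_add, Complex.exp_add, hzc, Complex.exp_two_pi_mul_I, mul_one]
    push_cast at this ⊢
    rw [this, sub_self, zero_div]
  -- transfer the a.e. identity to the pi space
  have hpi : ∀ᵐ x : Fin d → ℝ,
      (∑ l ∈ Λ, ({y : EuclideanSpace ℝ (Fin d) | ∀ j, y j ∈ Set.Ioo 0 (c j)}).indicator
          (fun _ => (1 : ℝ)) ((MeasurableEquiv.toLp 2 (Fin d → ℝ)) x - l)) =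
      ({y : EuclideanSpace ℝ (Fin d) | ∀ j, y j ∈ Set.Ioo 0 1}).indicator
        (fun _ => (1 : ℝ)) ((MeasurableEquiv.toLp 2 (Fin d → ℝ)) x) :=
    (MeasurePreserving.symm _
      (EuclideanSpace.volume_preserving_symm_measurableEquiv_toLp (Fin d))).quasiMeasurePreserving.ae hΛ
  -- pointwise forms of the two sides
  have hLHS : ∀ x : Fin d → ℝ,
      (((∑ l ∈ Λ, ({y : EuclideanSpace ℝ (Fin d) | ∀ j, y j ∈ Set.Ioo 0 (c j)}).indicator
          (fun _ => (1 : ℝ)) ((MeasurableEquiv.toLp 2 (Fin d → ℝ)) x - l)) : ℝ) : ℂ)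
          * ∏ k, g k (x k)
        = ∑ l ∈ Λ, ∏ k, ((Set.Ioo (l k) (l k + c k)).indicator (fun _ => (1 : ℂ)) (x k)
            * g k (x k)) := by
    intro x
    push_cast
    rw [Finset.sum_mul]
    refine Finset.sum_congr rfl fun l _ => ?_
    rw [sub_box_indicator_eq_prod]
    push_cast
    rw [← Finset.prod_mul_distrib]
    refine Finset.prod_congr rfl fun k _ => by rw [cast_ind]; rfl
  have hRHS : ∀ x : Fin d → ℝ,
      ((({y : EuclideanSpace ℝ (Fin d) | ∀ j, y j ∈ Set.Ioo 0 1}).indicator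
          (fun _ => (1 : ℝ)) ((MeasurableEquiv.toLp 2 (Fin d → ℝ)) x) : ℝ) : ℂ)
          * ∏ k, g k (x k)
        = ∏ k, ((Set.Ioo (0 : ℝ) 1).indicator (fun _ => (1 : ℂ)) (x k) * g k (x k)) := by
    intro x
    rw [box_indicator_eq_prod (fun _ => (0:ℝ)) (fun _ => (1:ℝ))]
    push_cast
    rw [← Finset.prod_mul_distrib]
    refine Finset.prod_congr rfl fun k _ => by rw [cast_ind]; rfl
  -- the sum side integrates to zero
  have hsum : (∫ x : Fin d → ℝ, ∑ l ∈ Λ, ∏ k,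
      ((Set.Ioo (l k) (l k + c k)).indicator (fun _ => (1 : ℂ)) (x k) * g k (x k))) = 0 := by
    rw [volume_pi, integral_finset_sum Λ (fun l _ => Integrable.fintype_prod
      (f := fun k t => (Set.Ioo (l k) (l k + c k)).indicator (fun _ => (1 : ℂ)) t * g k t)
      (fun k => hInt (l k) (l k + c k) k))]
    refine Finset.sum_eq_zero fun l _ => ?_
    rw [integral_fintype_prod_eq_prod
      (fun k t => (Set.Ioo (l k) (l k + c k)).indicator (fun _ => (1 : ℂ)) t * g k t)]
    exact Finset.prod_eq_zero (Finset.mem_univ j) (hvanish (l j))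
  -- the cube side integral
  have hcube : (∫ x : Fin d → ℝ, ∏ k,
      ((Set.Ioo (0 : ℝ) 1).indicator (fun _ => (1 : ℂ)) (x k) * g k (x k)))
      = (Complex.exp z - 1) / z := by
    rw [volume_pi, integral_fintype_prod_eq_prod
      (fun k t => (Set.Ioo (0 : ℝ) 1).indicator (fun _ => (1 : ℂ)) t * g k t)]
    rw [Finset.prod_eq_single j (fun k _ hk => ?_) (fun h => absurd (Finset.mem_univ j) h)]
    · have heq : (fun t : ℝ => (Set.Ioo (0:ℝ) 1).indicator (fun _ => (1 : ℂ)) t * g j t)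
          = (Set.Ioo (0:ℝ) 1).indicator (fun t => Complex.exp (z * t)) := by
        funext t
        by_cases ht : t ∈ Set.Ioo (0:ℝ) 1 <;> simp [ht, hgdef]
      rw [heq, integral_indicator measurableSet_Ioo, ← integral_Ioc_eq_integral_Ioo,
        ← intervalIntegral.integral_of_le (zero_le_one), integral_exp_mul_complex hz0]
      norm_num
    · have heq : (fun t : ℝ => (Set.Ioo (0:ℝ) 1).indicator (fun _ => (1 : ℂ)) t * g k t)
          = (Set.Ioo (0:ℝ) 1).indicator (fun _ => (1 : ℂ)) := by
        funext t
        by_cases ht : t ∈ Set.Ioo (0:ℝ) 1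
        · rw [Set.indicator_of_mem ht, one_mul]
          simp only [hgdef, if_neg hk]
          exact Set.indicator_of_mem ht _
        · rw [Set.indicator_of_notMem ht, zero_mul]
      rw [heq, integral_indicator_const (1 : ℂ) measurableSet_Ioo]
      simp [Real.volume_Ioo]
  -- combine
  have hzero : (Complex.exp z - 1) / z = 0 := by
    calc (Complex.exp z - 1) / z
        = ∫ x : Fin d → ℝ, ∏ k,
            ((Set.Ioo (0 : ℝ) 1).indicator (fun _ => (1 : ℂ)) (x k) * g k (x k)) := hcube.symm
      _ = ∫ x : Fin d → ℝ,
            ((({y : EuclideanSpace ℝ (Fin d) | ∀ j, y j ∈ Set.Ioo 0 1}).indicator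
              (fun _ => (1 : ℝ)) ((MeasurableEquiv.toLp 2 (Fin d → ℝ)) x) : ℝ) : ℂ)
              * ∏ k, g k (x k) :=
          integral_congr_ae (Filter.Eventually.of_forall fun x => (hRHS x).symm)
      _ = ∫ x : Fin d → ℝ,
            (((∑ l ∈ Λ, ({y : EuclideanSpace ℝ (Fin d) | ∀ j, y j ∈ Set.Ioo 0 (c j)}).indicator
              (fun _ => (1 : ℝ)) ((MeasurableEquiv.toLp 2 (Fin d → ℝ)) x - l)) : ℝ) : ℂ)
              * ∏ k, g k (x k) := by
          refine integral_congr_ae ?_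
          filter_upwards [hpi] with x hx
          exact congrArg (fun r : ℝ => (r : ℂ) * ∏ k, g k (x k)) hx.symm
      _ = ∫ x : Fin d → ℝ, ∑ l ∈ Λ, ∏ k,
            ((Set.Ioo (l k) (l k + c k)).indicator (fun _ => (1 : ℂ)) (x k) * g k (x k)) :=
          integral_congr_ae (Filter.Eventually.of_forall fun x => hLHS x)
      _ = 0 := hsum
  have hexp : Complex.exp z = 1 := by
    rcases div_eq_zero_iff.mp hzero with h | h
    · exact sub_eq_zero.mp h
    · exact absurd h hz0
  obtain ⟨m, hm⟩ := Complex.exp_eq_one_iff.mp hexp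
  have hmre : 2 * Real.pi / c j = (m : ℝ) * (2 * Real.pi) := by
    have h1 : ((2 * Real.pi / c j : ℝ) : ℂ) * Complex.I
        = (((m : ℝ) * (2 * Real.pi) : ℝ) : ℂ) * Complex.I := by
      rw [← hzdef, hm]; push_cast; ring
    have h2 := mul_right_cancel₀ Complex.I_ne_zero h1
    exact_mod_cast h2
  have hminv : (c j)⁻¹ = (m : ℝ) := by
    have hpi2 : (0:ℝ) < 2 * Real.pi := by positivity
    have h3 : 2 * Real.pi * (c j)⁻¹ = 2 * Real.pi * (m : ℝ) := by
      rw [div_eq_mul_inv] at hmre; linarith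
    exact mul_left_cancel₀ hpi2.ne' h3
  have hmpos : 0 < m := by
    have : (0:ℝ) < (m : ℝ) := by rw [← hminv]; positivity
    exact_mod_cast this
  refine ⟨m.toNat, by omega, ?_⟩
  rw [hminv]
  exact_mod_cast (Int.toNat_of_nonneg hmpos.le).symm

lemma hyperplane_null {d : ℕ} (j : Fin d) (a : ℝ) :
    volume {x : EuclideanSpace ℝ (Fin d) | x j = a} = 0 := by
  have e := (EuclideanSpace.volume_preserving_symm_measurableEquiv_toLp (Fin d)).symm
  have hmap : (volume : Measure (Fin d → ℝ)).map
      (MeasurableEquiv.toLp 2 (Fin d → ℝ)) = volume := e.map_eq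
  rw [← hmap, MeasurableEquiv.map_apply]
  have hset : (MeasurableEquiv.toLp 2 (Fin d → ℝ)) ⁻¹'
        {x : EuclideanSpace ℝ (Fin d) | x j = a}
      = Set.pi Set.univ (fun k => if k = j then {a} else Set.univ) := by
    ext x
    simp only [Set.mem_preimage, Set.mem_setOf_eq, Set.mem_univ_pi]
    constructor
    · intro h k
      by_cases hk : k = j
      · subst hk; simpa using h
      · simp [hk]
    · intro h
      have := h j
      simpa using this
  rw [hset, volume_pi_pi]
  exact Finset.prod_eq_zero (Finset.mem_univ j) (by simp)

lemma oneD_sum_indicator (co : ℝ) (hc : 0 < co) (n : ℕ) (t : ℝ)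
    (ht : ∀ m : ℕ, m ≤ n → t ≠ m * co) :
    ∑ k : Fin n, (Set.Ioo ((k : ℝ) * co) ((k : ℝ) * co + co)).indicator (fun _ => (1 : ℝ)) t
      = (Set.Ioo 0 ((n : ℝ) * co)).indicator (fun _ => (1 : ℝ)) t := by
  induction n with
  | zero => simp
  | succ n ih =>
    rw [Fin.sum_univ_castSucc]
    simp only [Fin.coe_castSucc, Fin.val_last]
    rw [ih (fun m hm => ht m (hm.trans (Nat.le_succ n)))]
    have h0 : t ≠ 0 := by simpa using ht 0 (Nat.zero_le _)
    have hn : t ≠ (n : ℝ) * co := ht n (Nat.le_succ n)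
    have hn1 : t ≠ ((n : ℝ) + 1) * co := by
      have := ht (n + 1) le_rfl; push_cast at this; exact this
    have hge : (0:ℝ) ≤ (n : ℝ) * co := by positivity
    simp only [Set.indicator_apply, Set.mem_Ioo]
    push_cast
    rcases lt_trichotomy t ((n : ℝ) * co) with h | h | h
    · rcases lt_or_ge 0 t with h2 | h2
      · rw [if_pos ⟨h2, h⟩, if_neg (by intro hh; linarith [hh.1]), if_pos ⟨h2, by linarith⟩]
        ring
      · rw [if_neg (by intro hh; linarith [hh.1]), if_neg (by intro hh; linarith [hh.1]),
          if_neg (by intro hh; linarith [hh.1])]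
        ring
    · exact absurd h hn
    · rcases lt_trichotomy t ((n : ℝ) * co + co) with h2 | h2 | h2
      · rw [if_neg (by intro hh; linarith [hh.2]), if_pos ⟨h, h2⟩,
          if_pos ⟨by linarith, by linarith⟩]
        ring
      · exact absurd (by linarith : t = ((n:ℝ)+1) * co) hn1
      · rw [if_neg (by intro hh; linarith [hh.2]), if_neg (by intro hh; linarith [hh.2]),
          if_neg (by intro hh; linarith [hh.2])]
        ring

lemma mpr_dir (d : ℕ) (c : Fin d → ℝ) (hc : ∀ j, 0 < c j)
    (hn : ∀ j, ∃ n : ℕ, 0 < n ∧ (c j)⁻¹ = n) :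
    (∃ Λ : Finset (EuclideanSpace ℝ (Fin d)),
      ∀ᵐ x : EuclideanSpace ℝ (Fin d),
        (∑ l ∈ Λ, ({y : EuclideanSpace ℝ (Fin d) | ∀ j, y j ∈ Set.Ioo 0 (c j)}).indicator
            (fun _ => (1 : ℝ)) (x - l)) =
        ({y : EuclideanSpace ℝ (Fin d) | ∀ j, y j ∈ Set.Ioo 0 1}).indicator
          (fun _ => (1 : ℝ)) x) := by
  classical
  choose n hn0 hcn using hn
  have hnc : ∀ j, (n j : ℝ) * c j = 1 := by
    intro j
    have h1 : c j = ((n j : ℝ))⁻¹ := by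
      rw [← inv_inv (c j), hcn j]
    rw [h1]
    rw [mul_inv_cancel₀]
    exact_mod_cast (hn0 j).ne'
  refine ⟨Finset.image
      (fun k : (∀ j, Fin (n j)) =>
        (WithLp.toLp 2 (fun j => (k j : ℝ) * c j) : EuclideanSpace ℝ (Fin d))) Finset.univ, ?_⟩
  have hinj : ∀ k ∈ (Finset.univ : Finset (∀ j, Fin (n j))), ∀ k' ∈ Finset.univ,
      (WithLp.toLp 2 (fun j => (k j : ℝ) * c j) : EuclideanSpace ℝ (Fin d)) =
        (WithLp.toLp 2 (fun j => (k' j : ℝ) * c j)) → k = k' := by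
    intro k _ k' _ h
    funext j
    have hj : (k j : ℝ) * c j = (k' j : ℝ) * c j := congrFun (congrArg WithLp.ofLp h) j
    have := mul_right_cancel₀ (hc j).ne' hj
    exact Fin.ext (by exact_mod_cast this)
  rw [ae_iff]
  refine measure_mono_null ?_
    (measure_iUnion_null (fun j : Fin d => measure_iUnion_null
      (fun m : ℕ => hyperplane_null j ((m : ℝ) * c j))))
  intro x hx
  simp only [Set.mem_setOf_eq] at hx
  by_contra hxe
  simp only [Set.mem_iUnion, Set.mem_setOf_eq, not_exists] at hxe
  apply hx
  rw [Finset.sum_image (f := fun l => ({y : EuclideanSpace ℝ (Fin d) | ∀ j, y j ∈ Set.Ioo 0 (c j)}).indicator (fun _ => (1 : ℝ)) (x - l)) hinj]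
  calc
    ∑ k : (∀ j, Fin (n j)),
        ({y : EuclideanSpace ℝ (Fin d) | ∀ j, y j ∈ Set.Ioo 0 (c j)}).indicator
          (fun _ => (1 : ℝ)) (x - (WithLp.toLp 2 (fun j => (k j : ℝ) * c j) : EuclideanSpace ℝ (Fin d)))
      = ∑ k : (∀ j, Fin (n j)), ∏ j,
          (Set.Ioo ((k j : ℝ) * c j) ((k j : ℝ) * c j + c j)).indicator
            (fun _ => (1 : ℝ)) (x j) := by
        refine Finset.sum_congr rfl fun k _ => ?_
        exact sub_box_indicator_eq_prod c _ x
    _ = ∏ j, ∑ kj : Fin (n j),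
          (Set.Ioo ((kj : ℝ) * c j) ((kj : ℝ) * c j + c j)).indicator
            (fun _ => (1 : ℝ)) (x j) := by
        rw [Finset.prod_univ_sum]
        rw [Fintype.piFinset_univ]
    _ = ∏ j, (Set.Ioo 0 ((n j : ℝ) * c j)).indicator (fun _ => (1 : ℝ)) (x j) := by
        refine Finset.prod_congr rfl fun j _ => ?_
        exact oneD_sum_indicator (c j) (hc j) (n j) (x j) (fun m _ => hxe j m)
    _ = ({y : EuclideanSpace ℝ (Fin d) | ∀ j, y j ∈ Set.Ioo 0 1}).indicator
          (fun _ => (1 : ℝ)) x := by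
        rw [box_indicator_eq_prod (fun _ => (0:ℝ)) (fun _ => (1:ℝ)) x]
        refine Finset.prod_congr rfl fun j _ => ?_
        rw [hnc j]

/-- A brick with side lengths `c j` tiles the unit cube `(0,1)^d` by translations
if and only if every `1 / c j` is a positive integer. -/
theorem brick_tiles_unit_cube_iff (d : ℕ) (hd : 1 ≤ d)
    (c : Fin d → ℝ) (hc : ∀ j, 0 < c j) :
    (∃ Λ : Finset (EuclideanSpace ℝ (Fin d)),
      ∀ᵐ x : EuclideanSpace ℝ (Fin d),
        (∑ l ∈ Λ, ({y : EuclideanSpace ℝ (Fin d) | ∀ j, y j ∈ Set.Ioo 0 (c j)}).indicator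
            (fun _ => (1 : ℝ)) (x - l)) =
        ({y : EuclideanSpace ℝ (Fin d) | ∀ j, y j ∈ Set.Ioo 0 1}).indicator
          (fun _ => (1 : ℝ)) x)
    ↔ ∀ j, ∃ n : ℕ, 0 < n ∧ (c j)⁻¹ = n := by
  constructor
  · rintro ⟨Λ, hΛ⟩ j
    exact mp_dir d c hc Λ hΛ j
  · exact fun h => mpr_dir d c hc h
end

section
/- If a rectangle (0,w)×(0,h) is tiled by translates of bricks from the set {1×R, R×1, (R-1)×(R-1)} with R > 2 irrational, then considering any horizontal line segment of the tiling, w is a nonnegative integer combination of 1, R, and R-1. -/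
open MeasureTheory

lemma ind_prod_eq (s t : Set ℝ) (a b : ℝ) :
    (s ×ˢ t).indicator (fun _ => (1 : ℝ)) (a, b) =
      s.indicator (fun _ => (1 : ℝ)) a * t.indicator (fun _ => (1 : ℝ)) b := by
  by_cases ha : a ∈ s <;> by_cases hb : b ∈ t <;>
    simp [Set.indicator_apply, ha, hb, Set.mem_prod]

lemma indIoo_integrable (a b : ℝ) :
    Integrable (fun x : ℝ => (Set.Ioo a b).indicator (fun _ => (1 : ℝ)) x) := by
  rw [integrable_indicator_iff measurableSet_Ioo]
  exact integrableOn_const measure_Ioo_lt_top.ne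

lemma indIoo_integral (b : ℝ) (h : 0 ≤ b) :
    ∫ x : ℝ, (Set.Ioo 0 b).indicator (fun _ => (1 : ℝ)) x = b := by
  rw [integral_indicator measurableSet_Ioo]
  simp [Real.volume_Ioo, ENNReal.toReal_ofReal h, h]

/-- Integral of a translated width-`b` indicator times a constant. -/
lemma term_integral (b c a : ℝ) (hb : 0 ≤ b) :
    ∫ x : ℝ, (Set.Ioo 0 b).indicator (fun _ => (1 : ℝ)) (x - a) * c = b * c := by
  rw [MeasureTheory.integral_mul_const]
  rw [show (∫ x : ℝ, (Set.Ioo 0 b).indicator (fun _ => (1 : ℝ)) (x - a)) =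
      ∫ x : ℝ, (Set.Ioo 0 b).indicator (fun _ => (1 : ℝ)) x from
    integral_sub_right_eq_self _ a]
  rw [indIoo_integral b hb]

lemma term_integrable (b c a : ℝ) :
    Integrable (fun x : ℝ => (Set.Ioo 0 b).indicator (fun _ => (1 : ℝ)) (x - a) * c) :=
  ((indIoo_integrable 0 b).comp_sub_right a).mul_const c

/-- If a rectangle `(0,w) × (0,h)` is tiled by translates of the bricks `1 × R`, `R × 1`,
`(R-1) × (R-1)` with `R > 2` irrational, then `w` is a nonnegative integer combination of
`1`, `R` and `R - 1`. -/
theorem width_is_integer_combination (R : ℝ) (hR : 2 < R) (hirr : Irrational R)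
    (w h : ℝ) (hw : 0 < w) (hh : 0 < h)
    (Λ1 Λ2 Λ3 : Finset (ℝ × ℝ))
    (htile : ∀ᵐ x : ℝ × ℝ,
      (∑ l ∈ Λ1, (Set.Ioo (0 : ℝ) 1 ×ˢ Set.Ioo (0 : ℝ) R).indicator
          (fun _ => (1 : ℝ)) (x - l)) +
      (∑ l ∈ Λ2, (Set.Ioo (0 : ℝ) R ×ˢ Set.Ioo (0 : ℝ) 1).indicator
          (fun _ => (1 : ℝ)) (x - l)) +
      (∑ l ∈ Λ3, (Set.Ioo (0 : ℝ) (R - 1) ×ˢ Set.Ioo (0 : ℝ) (R - 1)).indicator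
          (fun _ => (1 : ℝ)) (x - l)) =
      (Set.Ioo (0 : ℝ) w ×ˢ Set.Ioo (0 : ℝ) h).indicator (fun _ => (1 : ℝ)) x) :
    ∃ p q r : ℕ, w = (p : ℝ) * 1 + (q : ℝ) * R + (r : ℝ) * (R - 1) := by
  set P : ℝ × ℝ → Prop := fun x =>
      (∑ l ∈ Λ1, (Set.Ioo (0 : ℝ) 1 ×ˢ Set.Ioo (0 : ℝ) R).indicator
          (fun _ => (1 : ℝ)) (x - l)) +
      (∑ l ∈ Λ2, (Set.Ioo (0 : ℝ) R ×ˢ Set.Ioo (0 : ℝ) 1).indicator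
          (fun _ => (1 : ℝ)) (x - l)) +
      (∑ l ∈ Λ3, (Set.Ioo (0 : ℝ) (R - 1) ×ˢ Set.Ioo (0 : ℝ) (R - 1)).indicator
          (fun _ => (1 : ℝ)) (x - l)) =
      (Set.Ioo (0 : ℝ) w ×ˢ Set.Ioo (0 : ℝ) h).indicator (fun _ => (1 : ℝ)) x with hP
  have h1 : ∀ᵐ z ∂((volume : Measure ℝ).prod volume), P z := by
    rw [← MeasureTheory.Measure.volume_eq_prod]; exact htile
  have h2 : ∀ᵐ z ∂((volume : Measure ℝ).prod volume), P z.swap :=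
    (Measure.measurePreserving_swap).quasiMeasurePreserving.tendsto_ae.eventually h1
  have h3 : ∀ᵐ y : ℝ, ∀ᵐ x : ℝ, P (x, y) := MeasureTheory.Measure.ae_ae_of_ae_prod h2
  -- pick a good height y in (0, h)
  obtain ⟨y, hy, hQ⟩ : ∃ y ∈ Set.Ioo (0 : ℝ) h, ∀ᵐ x : ℝ, P (x, y) := by
    by_contra hcon
    push_neg at hcon
    have hsub : Set.Ioo (0 : ℝ) h ⊆ {y : ℝ | ¬ ∀ᵐ x : ℝ, P (x, y)} := fun y hy =>
      Filter.not_eventually.mpr (hcon y hy)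
    have h0 : volume (Set.Ioo (0 : ℝ) h) = 0 := measure_mono_null hsub h3
    rw [Real.volume_Ioo] at h0
    simp only [sub_zero] at h0
    exact (ENNReal.ofReal_pos.mpr hh).ne' h0
  -- rewrite the a.e. equation in terms of 1D functions
  have hR1 : (0 : ℝ) ≤ R := by linarith
  have hR2 : (0 : ℝ) ≤ R - 1 := by linarith
  set c1 : ℝ × ℝ → ℝ := fun l => (Set.Ioo (0 : ℝ) R).indicator (fun _ => (1 : ℝ)) (y - l.2)
  set c2 : ℝ × ℝ → ℝ := fun l => (Set.Ioo (0 : ℝ) 1).indicator (fun _ => (1 : ℝ)) (y - l.2)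
  set c3 : ℝ × ℝ → ℝ := fun l =>
    (Set.Ioo (0 : ℝ) (R - 1)).indicator (fun _ => (1 : ℝ)) (y - l.2)
  set A : ℝ → ℝ := fun x =>
    ∑ l ∈ Λ1, (Set.Ioo (0 : ℝ) 1).indicator (fun _ => (1 : ℝ)) (x - l.1) * c1 l with hA
  set B : ℝ → ℝ := fun x =>
    ∑ l ∈ Λ2, (Set.Ioo (0 : ℝ) R).indicator (fun _ => (1 : ℝ)) (x - l.1) * c2 l with hB
  set C : ℝ → ℝ := fun x =>
    ∑ l ∈ Λ3, (Set.Ioo (0 : ℝ) (R - 1)).indicator (fun _ => (1 : ℝ)) (x - l.1) * c3 l with hC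
  have key : ∀ᵐ x : ℝ,
      A x + B x + C x = (Set.Ioo (0 : ℝ) w).indicator (fun _ => (1 : ℝ)) x := by
    filter_upwards [hQ] with x hx
    rw [hP] at hx
    have hsub : ∀ l : ℝ × ℝ, (x, y) - l = (x - l.1, y - l.2) := fun l => rfl
    simp only [hsub, ind_prod_eq] at hx
    rw [hA, hB, hC]
    simp only
    rw [hx]
    simp [Set.indicator_of_mem hy]
  -- integrability
  have hint1 : ∀ l ∈ Λ1, Integrable
      (fun x : ℝ => (Set.Ioo (0 : ℝ) 1).indicator (fun _ => (1 : ℝ)) (x - l.1) * c1 l) :=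
    fun l _ => term_integrable 1 (c1 l) l.1
  have hint2 : ∀ l ∈ Λ2, Integrable
      (fun x : ℝ => (Set.Ioo (0 : ℝ) R).indicator (fun _ => (1 : ℝ)) (x - l.1) * c2 l) :=
    fun l _ => term_integrable R (c2 l) l.1
  have hint3 : ∀ l ∈ Λ3, Integrable
      (fun x : ℝ => (Set.Ioo (0 : ℝ) (R - 1)).indicator (fun _ => (1 : ℝ)) (x - l.1) * c3 l) :=
    fun l _ => term_integrable (R - 1) (c3 l) l.1
  have hS1 : Integrable A := integrable_finset_sum _ hint1
  have hS2 : Integrable B := integrable_finset_sum _ hint2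
  have hS3 : Integrable C := integrable_finset_sum _ hint3
  -- integrate both sides
  have hIeq : (∫ x : ℝ, (A x + B x + C x)) =
      ∫ x : ℝ, (Set.Ioo (0 : ℝ) w).indicator (fun _ => (1 : ℝ)) x :=
    integral_congr_ae key
  have e1 : (∫ x : ℝ, (A x + B x + C x)) = (∫ x : ℝ, (A x + B x)) + ∫ x : ℝ, C x :=
    integral_add (hS1.add hS2) hS3
  have e2 : (∫ x : ℝ, (A x + B x)) = (∫ x : ℝ, A x) + ∫ x : ℝ, B x :=
    integral_add hS1 hS2
  have eA : (∫ x : ℝ, A x) =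
      ∑ l ∈ Λ1, (1 : ℝ) * c1 l := by
    rw [hA]
    rw [integral_finset_sum _ hint1]
    exact Finset.sum_congr rfl fun l _ => term_integral 1 (c1 l) l.1 (by norm_num)
  have eB : (∫ x : ℝ, B x) =
      ∑ l ∈ Λ2, R * c2 l := by
    rw [hB]
    rw [integral_finset_sum _ hint2]
    exact Finset.sum_congr rfl fun l _ => term_integral R (c2 l) l.1 hR1
  have eC : (∫ x : ℝ, C x) =
      ∑ l ∈ Λ3, (R - 1) * c3 l := by
    rw [hC]
    rw [integral_finset_sum _ hint3]
    exact Finset.sum_congr rfl fun l _ => term_integral (R - 1) (c3 l) l.1 hR2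
  rw [e1, e2, eA, eB, eC, indIoo_integral w hw.le] at hIeq
  -- sums of 0/1 indicators are cardinalities of filters
  have hcard : ∀ (s : Finset (ℝ × ℝ)) (b : ℝ),
      ∑ l ∈ s, (Set.Ioo (0 : ℝ) b).indicator (fun _ => (1 : ℝ)) (y - l.2) =
        ((s.filter (fun l => y - l.2 ∈ Set.Ioo (0 : ℝ) b)).card : ℝ) := by
    intro s b
    rw [Finset.card_filter]
    push_cast
    exact Finset.sum_congr rfl fun l _ => by
      by_cases hl : y - l.2 ∈ Set.Ioo (0 : ℝ) b <;> simp [Set.indicator_apply, hl]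
  refine ⟨(Λ1.filter (fun l => y - l.2 ∈ Set.Ioo (0 : ℝ) R)).card,
      (Λ2.filter (fun l => y - l.2 ∈ Set.Ioo (0 : ℝ) 1)).card,
      (Λ3.filter (fun l => y - l.2 ∈ Set.Ioo (0 : ℝ) (R - 1))).card, ?_⟩
  rw [← hIeq]
  simp only [c1, c2, c3, one_mul]
  rw [← Finset.mul_sum, ← Finset.mul_sum, hcard Λ1 R, hcard Λ2 1, hcard Λ3 (R - 1)]
  ring
end

section
/- Suppose a 1-dimensional tiling: finite multisets of translates of the intervals (0,a) and (0,b) (a, b > 0) partition (0,1) up to measure zero, i.e. ∑_{λ∈Λ_a} χ_{(λ,λ+a)} + ∑_{μ∈Λ_b} χ_{(μ,μ+b)} = χ_{(0,1)} a.e. Then 1 = |Λ_a|·a + |Λ_b|·b, and moreover the tiling can be rearranged so that all a-intervals come first: (0, |Λ_a|·a) is tiled by a-intervals and (|Λ_a|·a, 1) by b-intervals. -/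
open MeasureTheory

lemma ind_integrable (c l : ℝ) :
    Integrable ((Set.Ioo l (l + c)).indicator (fun _ => (1 : ℝ))) := by
  rw [integrable_indicator_iff measurableSet_Ioo]
  refine integrableOn_const ?_ ?_
  · rw [Real.volume_Ioo]
    exact ENNReal.ofReal_ne_top
  · simp

lemma ind_integral (c l : ℝ) (hc : 0 ≤ c) :
    ∫ x, (Set.Ioo l (l + c)).indicator (fun _ => (1 : ℝ)) x = c := by
  rw [integral_indicator_const _ measurableSet_Ioo, measureReal_def, Real.volume_Ioo]
  simp [ENNReal.toReal_ofReal, hc]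

lemma seq_tiling (c : ℝ) (hc : 0 < c) (t : ℝ) (n : ℕ) :
    ∀ᵐ x : ℝ, ∑ k ∈ Finset.range n,
      (Set.Ioo (t + k * c) (t + k * c + c)).indicator (fun _ => (1 : ℝ)) x
      = (Set.Ioo t (t + n * c)).indicator (fun _ => (1 : ℝ)) x := by
  induction n with
  | zero => simp
  | succ n ih =>
    have h0 : ∀ᵐ x : ℝ, x ≠ t + n * c := by
      rw [ae_iff]
      simpa using (by simp : volume {t + (n:ℝ) * c} = 0)
    filter_upwards [ih, h0] with x hx hne
    rw [Finset.sum_range_succ, hx]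
    have hn : (0:ℝ) ≤ (n:ℝ) := Nat.cast_nonneg n
    have hexp : t + ((n:ℝ) + 1) * c = t + (n:ℝ) * c + c := by ring
    have hnc : (0:ℝ) ≤ (n:ℝ) * c := by positivity
    simp only [Set.indicator_apply, Set.mem_Ioo]
    push_cast
    split_ifs with h1 h2 h3 h3 h2 h3 h3
    · exfalso; linarith [h1.2, h2.1]
    · exfalso; linarith [h1.2, h2.1]
    · norm_num
    · exfalso; push_neg at h3; linarith [h1.2, h3 h1.1]
    · norm_num
    · exfalso; push_neg at h3
      have htx : t < x := by linarith [h2.1, hnc]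
      linarith [h2.2, h3 htx]
    · exfalso; push_neg at h1 h2
      have hmx : t + (n:ℝ) * c ≤ x := h1 h3.1
      have hmx' : t + (n:ℝ) * c < x := lt_of_le_of_ne hmx (Ne.symm hne)
      linarith [h2 hmx', h3.2]
    · norm_num

/-- 1-dimensional case: if translates of the intervals `(0,a)` and `(0,b)` tile `(0,1)`,
then `1 = |Λa| * a + |Λb| * b`, and the tiling can be rearranged so that all the
`a`-intervals come first: `(0, |Λa| * a)` is tiled by `a`-intervals and `(|Λa| * a, 1)`
by `b`-intervals. -/
theorem one_dimensional_sorted_tiling (a b : ℝ) (ha : 0 < a) (hb : 0 < b)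
    (Λa Λb : Finset ℝ)
    (htile : ∀ᵐ x : ℝ,
      (∑ l ∈ Λa, (Set.Ioo l (l + a)).indicator (fun _ => (1 : ℝ)) x) +
      (∑ l ∈ Λb, (Set.Ioo l (l + b)).indicator (fun _ => (1 : ℝ)) x) =
      (Set.Ioo (0 : ℝ) 1).indicator (fun _ => (1 : ℝ)) x) :
    1 = (Λa.card : ℝ) * a + (Λb.card : ℝ) * b ∧
    ∃ Λa' Λb' : Finset ℝ,
      (∀ᵐ x : ℝ,
        (∑ l ∈ Λa', (Set.Ioo l (l + a)).indicator (fun _ => (1 : ℝ)) x) =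
        (Set.Ioo (0 : ℝ) ((Λa.card : ℝ) * a)).indicator (fun _ => (1 : ℝ)) x) ∧
      (∀ᵐ x : ℝ,
        (∑ l ∈ Λb', (Set.Ioo l (l + b)).indicator (fun _ => (1 : ℝ)) x) =
        (Set.Ioo ((Λa.card : ℝ) * a) 1).indicator (fun _ => (1 : ℝ)) x) := by
  have hinta : ∀ l : ℝ, Integrable ((Set.Ioo l (l + a)).indicator (fun _ => (1 : ℝ))) :=
    fun l => ind_integrable a l
  have hintb : ∀ l : ℝ, Integrable ((Set.Ioo l (l + b)).indicator (fun _ => (1 : ℝ))) :=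
    fun l => ind_integrable b l
  have hsuma : Integrable (fun x => ∑ l ∈ Λa, (Set.Ioo l (l + a)).indicator (fun _ => (1 : ℝ)) x) :=
    integrable_finset_sum _ (fun l _ => hinta l)
  have hsumb : Integrable (fun x => ∑ l ∈ Λb, (Set.Ioo l (l + b)).indicator (fun _ => (1 : ℝ)) x) :=
    integrable_finset_sum _ (fun l _ => hintb l)
  have hlen : 1 = (Λa.card : ℝ) * a + (Λb.card : ℝ) * b := by
    have h1 := integral_congr_ae htile
    rw [integral_add hsuma hsumb, integral_finset_sum _ (fun l _ => hinta l),
      integral_finset_sum _ (fun l _ => hintb l)] at h1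
    simp only [ind_integral a _ ha.le, ind_integral b _ hb.le, Finset.sum_const,
      nsmul_eq_mul] at h1
    have h2 : ∫ x, (Set.Ioo (0:ℝ) 1).indicator (fun _ => (1:ℝ)) x = 1 := by
      have := ind_integral 1 0 zero_le_one
      simpa using this
    rw [h2] at h1
    linarith
  refine ⟨hlen, (Finset.range Λa.card).image (fun k : ℕ => (k : ℝ) * a),
    (Finset.range Λb.card).image (fun k : ℕ => (Λa.card : ℝ) * a + (k : ℝ) * b), ?_, ?_⟩
  · have hinj : Set.InjOn (fun k : ℕ => (k : ℝ) * a) (Finset.range Λa.card) := by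
      intro i _ j _ h
      simp only at h
      exact_mod_cast mul_right_cancel₀ ha.ne' h
    have := seq_tiling a ha 0 Λa.card
    filter_upwards [this] with x hx
    rw [Finset.sum_image (fun i hi j hj h => hinj hi hj h)]
    simpa using hx
  · have hinj : Set.InjOn (fun k : ℕ => (Λa.card : ℝ) * a + (k : ℝ) * b)
      (Finset.range Λb.card) := by
      intro i _ j _ h
      simp only [add_right_inj] at h
      exact_mod_cast mul_right_cancel₀ hb.ne' h
    have := seq_tiling b hb ((Λa.card : ℝ) * a) Λb.card
    filter_upwards [this] with x hx
    rw [Finset.sum_image (fun i hi j hj h => hinj hi hj h)]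
    have h1 : (Λa.card : ℝ) * a + (Λb.card : ℝ) * b = 1 := hlen.symm
    rw [hx, h1]
end
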